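/- For every positive integer s, every positive integer k, and every integer m ≥ s·k, the following holds. Denote by u_1, ..., u_{m+1} the children of the root of T_1^{(s,k,m)} and by v_1, ..., v_{m+1} the children of the root of T_2^{(s,k,m)}, where the subtrees hanging at u_1, ..., u_{m+1} and at v_1, ..., v_m are copies of T_2^{(s-1,k,m)} (with the convention for s = 1 that these are stars of m childless children) and the subtree at v_{m+1} is a copy of T_1^{(s-1,k,m)}. For every 1 ≤ t ≤ m+1 and 1 ≤ t' ≤ m fix a rooted-tree isomorphism φ_{t,t'} from the subtree at u_t onto the subtree at v_{t'} with φ_{t,t'}(u_t) = v_{t'}. Let ℓ ≤ k and let (x_1, y_1), ..., (x_ℓ, y_ℓ) be designated pairs of vertices of T_1^{(s,k,m)} × T_2^{(s,k,m)} such that: (IH1) each x_i lies in the union of the subtrees at u_1, ..., u_{m+1} and each y_i lies in the union of the subtrees at v_1, ..., v_m; (IH2) for i ≠ j, x_i and x_j lie in the same subtree at some u_t if and only if y_i and y_j lie in the same subtree at some v_{t'}; (IH3) for each i, if x_i lies in the subtree at u_t and y_i in the subtree at v_{t'}, then y_i = φ_{t,t'}(x_i). Then, setting x_0 and y_0 to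 be the two roots, Duplicator wins ehr[T_1^{(s,k,m)}, T_2^{(s,k,m)}, s; k] with Spoiler starting on T_2^{(s,k,m)}, with the winning conditions (Main 1) and (Main 2) required to hold over all played pairs together with the ℓ+1 designated pairs. -/

import Mathlib

/-! ## Rooted trees -/

/-- A rooted tree structure: a vertex type, a root, and a parent map
(`parent v = none` is intended to hold exactly when `v` is the root). -/
structure RTree where
  V : Type
  root : V
  parent : V → Option V

namespace RTree

/-- Iterate the parent map `n` times. -/
def parentIter (T : RTree) : ℕ → T.V → Option T.V
  | 0, v => some v
  | n + 1, v => (T.parent v).bind (T.parentIter n)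

/-- `u` is a descendant of `v` (possibly `u = v`). -/
def IsDesc (T : RTree) (v u : T.V) : Prop :=
  ∃ n, T.parentIter n u = some v

/-- The structure is a genuine rooted, locally finite tree:
exactly the root has no parent, every vertex reaches the root by iterating
the parent map (connectivity and acyclicity), and every vertex has finitely
many children (local finiteness). -/
def IsTree (T : RTree) : Prop :=
  (∀ v, T.parent v = none ↔ v = T.root) ∧
  (∀ v, ∃ n, T.parentIter n v = some T.root) ∧
  (∀ v, {u | T.parent u = some v}.Finite)

open Classical in
/-- The subtree `T(v)` consisting of `v` and all its descendants, rooted at `v`. -/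
noncomputable def subtree (T : RTree) (v : T.V) : RTree where
  V := {u : T.V // T.IsDesc v u}
  root := ⟨v, 0, rfl⟩
  parent u :=
    if u.1 = v then none
    else (T.parent u.1).bind fun w =>
      if h : T.IsDesc v w then some ⟨w, h⟩ else none

end RTree

/-- An isomorphism of rooted trees: a bijection of vertices mapping root to
root and commuting with the parent maps. -/
structure TreeIso (S T : RTree) where
  toEquiv : S.V ≃ T.V
  map_root : toEquiv S.root = T.root
  map_parent : ∀ v, (S.parent v).map toEquiv = T.parent (toEquiv v)

/-! ## First-order logic of rooted trees -/

/-- Terms: variables (de Bruijn indices) and the constant `R` for the root. -/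
inductive FOTerm where
  | var : ℕ → FOTerm
  | root : FOTerm
deriving DecidableEq

/-- First-order formulas in the language of rooted trees: equality `x = y`,
the parent relation `parentOf t t'` (meaning `π(t') = t`, i.e. `t` is the
parent of `t'`), Boolean connectives, and quantifiers (de Bruijn style). -/
inductive FOFormula where
  | eq : FOTerm → FOTerm → FOFormula
  | parentOf : FOTerm → FOTerm → FOFormula
  | not : FOFormula → FOFormula
  | and : FOFormula → FOFormula → FOFormula
  | or : FOFormula → FOFormula → FOFormula
  | imp : FOFormula → FOFormula → FOFormula
  | all : FOFormula → FOFormula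
  | ex : FOFormula → FOFormula
deriving DecidableEq

namespace FOTerm

def eval (T : RTree) (env : ℕ → T.V) : FOTerm → T.V
  | var n => env n
  | root => T.root

def freeBound : FOTerm → ℕ
  | var n => n + 1
  | root => 0

end FOTerm

/-- Kinds of quantifiers, used to count alternations. -/
inductive QKind where
  | ex | all
deriving DecidableEq

/-- The dual of a quantifier kind. -/
def QKind.dual : QKind → QKind
  | .ex => .all
  | .all => .ex

namespace FOFormula

/-- Satisfaction of a formula in a rooted tree under an environment. -/
def Sat (T : RTree) : FOFormula → (ℕ → T.V) → Prop
  | eq t₁ t₂, env => t₁.eval T env = t₂.eval T env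
  | parentOf t₁ t₂, env => T.parent (t₂.eval T env) = some (t₁.eval T env)
  | not φ, env => ¬ φ.Sat T env
  | and φ ψ, env => φ.Sat T env ∧ ψ.Sat T env
  | or φ ψ, env => φ.Sat T env ∨ ψ.Sat T env
  | imp φ ψ, env => φ.Sat T env → ψ.Sat T env
  | all φ, env => ∀ w : T.V, φ.Sat T (fun n => match n with | 0 => w | Nat.succ k => env k)
  | ex φ, env => ∃ w : T.V, φ.Sat T (fun n => match n with | 0 => w | Nat.succ k => env k)

/-- Quantifier depth: the maximum number of nested quantifiers. -/
def qd : FOFormula → ℕ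
  | eq _ _ => 0
  | parentOf _ _ => 0
  | not φ => φ.qd
  | and φ ψ => max φ.qd ψ.qd
  | or φ ψ => max φ.qd ψ.qd
  | imp φ ψ => max φ.qd ψ.qd
  | all φ => φ.qd + 1
  | ex φ => φ.qd + 1

/-- Auxiliary alternation count: `aqdAux φ pol q` is the maximum number of
alternations between (effectively) existential and universal quantifiers along
a nested quantifier sequence of `φ`, given the current polarity `pol`
(`true` = positive; negations and antecedents of implications flip it, so that
e.g. a `∀` under a negation counts as an `∃`) and the effective kind `q` of
the innermost enclosing quantifier (if any). -/
def aqdAux : FOFormula → Bool → Option QKind → ℕ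
  | eq _ _, _, _ => 0
  | parentOf _ _, _, _ => 0
  | not φ, pol, q => φ.aqdAux (!pol) q
  | and φ ψ, pol, q => max (φ.aqdAux pol q) (ψ.aqdAux pol q)
  | or φ ψ, pol, q => max (φ.aqdAux pol q) (ψ.aqdAux pol q)
  | imp φ ψ, pol, q => max (φ.aqdAux (!pol) q) (ψ.aqdAux pol q)
  | all φ, pol, q =>
      (if q = some (if pol then QKind.ex else QKind.all) then 1 else 0) +
        φ.aqdAux pol (some (if pol then QKind.all else QKind.ex))
  | ex φ, pol, q =>
      (if q = some (if pol then QKind.all else QKind.ex) then 1 else 0) +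
        φ.aqdAux pol (some (if pol then QKind.ex else QKind.all))

/-- The number of alternations of quantifiers of a formula: the maximum number
of switches between (effectively) existential and universal quantifiers in a
nested quantifier sequence.  Purely existential or purely universal formulas
have `aqd = 0`. -/
def aqd (φ : FOFormula) : ℕ := φ.aqdAux true none

/-- A bound on the free variables of a formula: all free de Bruijn indices
are `< freeBound`. -/
def freeBound : FOFormula → ℕ
  | eq t₁ t₂ => max t₁.freeBound t₂.freeBound
  | parentOf t₁ t₂ => max t₁.freeBound t₂.freeBound
  | not φ => φ.freeBound
  | and φ ψ => max φ.freeBound ψ.freeBound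
  | or φ ψ => max φ.freeBound ψ.freeBound
  | imp φ ψ => max φ.freeBound ψ.freeBound
  | all φ => φ.freeBound - 1
  | ex φ => φ.freeBound - 1

/-- A sentence is a formula with no free variables. -/
def IsSentence (φ : FOFormula) : Prop := φ.freeBound = 0

end FOFormula

/-- A (closed) formula holds in a rooted tree. -/
def Models (T : RTree) (φ : FOFormula) : Prop :=
  φ.Sat T (fun _ => T.root)

/-- The formula `P_i(x)`, with free variable `x` being de Bruijn index `0`:
`P_0(x) = ∀ y ¬(π(y) = x)` and `P_{i+1}(x) = ∀ y (π(y) = x → ¬ P_i(y))`. -/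
def Pform : ℕ → FOFormula
  | 0 => .all (.not (.parentOf (.var 1) (.var 0)))
  | i + 1 => .all (.imp (.parentOf (.var 1) (.var 0)) (.not (Pform i)))

/-- The sentence `KEIN_i = P_i(R)`. -/
def KEIN : ℕ → FOFormula
  | 0 => .all (.not (.parentOf .root (.var 0)))
  | i + 1 => .all (.imp (.parentOf .root (.var 0)) (.not (Pform i)))

/-! ## Ehrenfeucht games -/

/-- The winning condition for Duplicator: for all pairs `(x_i, y_i)`, `(x_j, y_j)`
in the list of selected/designated pairs, (Main 1) `π(x_j) = x_i ↔ π(y_j) = y_i`,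
and (Main 2) `x_i = x_j ↔ y_i = y_j`. -/
def GoodPairs (T₁ T₂ : RTree) (ps : List (T₁.V × T₂.V)) : Prop :=
  ∀ p ∈ ps, ∀ q ∈ ps,
    (T₁.parent p.1 = some q.1 ↔ T₂.parent p.2 = some q.2) ∧
    (p.1 = q.1 ↔ p.2 = q.2)

/-- Duplicator wins the scheduled Ehrenfeucht game on `T₁, T₂` in which Spoiler
must play his moves in consecutive batches, the batch sizes given by the list
`sched`, switching trees after each batch; `side = true` means Spoiler currently
plays on `T₁` (Duplicator answering on `T₂`), `side = false` means Spoiler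
currently plays on `T₂`.  The list `ps` records the pairs selected so far
(including designated pairs and the pair of roots); Duplicator wins when the
final configuration satisfies `GoodPairs`. -/
def DupWinsSched (T₁ T₂ : RTree) : List ℕ → Bool → List (T₁.V × T₂.V) → Prop
  | [], _, ps => GoodPairs T₁ T₂ ps
  | 0 :: rest, side, ps => DupWinsSched T₁ T₂ rest (!side) ps
  | (n + 1) :: rest, side, ps =>
      if side then
        ∀ x : T₁.V, ∃ y : T₂.V, DupWinsSched T₁ T₂ (n :: rest) side ((x, y) :: ps)
      else
        ∀ y : T₂.V, ∃ x : T₁.V, DupWinsSched T₁ T₂ (n :: rest) side ((x, y) :: ps)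
termination_by sched _ _ => (sched.length, sched.sum)
decreasing_by
  all_goals
    first
      | exact Prod.Lex.left _ _ (Nat.lt_succ_self _)
      | exact Prod.Lex.right _ (by simp [List.sum_cons])

/-- The cost (in switches) for Spoiler of playing on side `side` when his
previous move (if any) was on side `last`. -/
def switchCost (last : Option Bool) (side : Bool) : ℕ :=
  match last with
  | none => 0
  | some b => if b = side then 0 else 1

/-- Duplicator wins the Ehrenfeucht game `EHR` with `rounds` remaining rounds,
`sw` remaining switches allowed to Spoiler, `last` the side on which Spoiler
made his previous move (if any), and `ps` the pairs selected so far.  In each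
round Spoiler picks a side (paying a switch if he changes trees, which he may
do only if he has switches left) and a vertex in that tree, and Duplicator
answers in the other tree. -/
def DupWinsEHRAux (T₁ T₂ : RTree) :
    ℕ → ℕ → Option Bool → List (T₁.V × T₂.V) → Prop
  | 0, _, _, ps => GoodPairs T₁ T₂ ps
  | r + 1, sw, last, ps =>
      ∀ side : Bool, switchCost last side ≤ sw →
        if side then
          ∀ x : T₁.V, ∃ y : T₂.V,
            DupWinsEHRAux T₁ T₂ r (sw - switchCost last side) (some side) ((x, y) :: ps)
        else
          ∀ y : T₂.V, ∃ x : T₁.V,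
            DupWinsEHRAux T₁ T₂ r (sw - switchCost last side) (some side) ((x, y) :: ps)

/-- Duplicator wins the game `EHR[T₁, T₂, s, r]`: `r` rounds, Spoiler may start
on either tree and make at most `s` switches. -/
def DupWinsEHR (T₁ T₂ : RTree) (s r : ℕ) : Prop :=
  DupWinsEHRAux T₁ T₂ r s none [(T₁.root, T₂.root)]

/-! ## The trees `T₁^{(s,k,m)}` and `T₂^{(s,k,m)}` -/

/-- The one-vertex rooted tree. -/
def single : RTree where
  V := PUnit
  root := PUnit.unit
  parent := fun _ => none

/-- Hang the trees `f 0, …, f (n-1)` from a new root: the root of each `f i`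
becomes a child of the new root. -/
def hang (n : ℕ) (f : Fin n → RTree) : RTree where
  V := Unit ⊕ (Σ i : Fin n, (f i).V)
  root := Sum.inl ()
  parent := fun x =>
    match x with
    | Sum.inl _ => none
    | Sum.inr ⟨i, w⟩ =>
      match (f i).parent w with
      | none => some (Sum.inl ())
      | some w' => some (Sum.inr ⟨i, w'⟩)

/-- The pair of trees `(T₁^{(s,k,m)}, T₂^{(s,k,m)})`, indexed by `s` (the
parameter `k` plays no role in the construction).  Conventions for `s = 0`:
`T₁^{(0)}` is a single vertex and `T₂^{(0)}` is a star of `m` childless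
children.  For `s ≥ 1`: in `T₁^{(s+1)}` the root has `m+1` children, from each
of which hangs a copy of `T₂^{(s)}`; in `T₂^{(s+1)}` the root has `m+1`
children, from `m` of which hangs a copy of `T₂^{(s)}` and from the remaining
one hangs a copy of `T₁^{(s)}`. -/
def TreePair (m : ℕ) : ℕ → RTree × RTree
  | 0 => (single, hang m fun _ => single)
  | s + 1 =>
      (hang (m + 1) fun _ => (TreePair m s).2,
       hang (m + 1) fun i => if i.1 = m then (TreePair m s).1 else (TreePair m s).2)

/-- The tree `T₁^{(s,k,m)}`. -/
def Tree1 (s k m : ℕ) : RTree := (TreePair m s).1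

/-- The tree `T₂^{(s,k,m)}`. -/
def Tree2 (s k m : ℕ) : RTree := (TreePair m s).2

namespace EhrAux
variable {T₁ T₂ : RTree}

theorem dws_nil {side ps} : DupWinsSched T₁ T₂ [] side ps ↔ GoodPairs T₁ T₂ ps := by
  rw [DupWinsSched]
theorem dws_zero {rest side ps} : DupWinsSched T₁ T₂ (0::rest) side ps ↔ DupWinsSched T₁ T₂ rest (!side) ps := by
  rw [DupWinsSched]
theorem dws_succ_true {n rest ps} : DupWinsSched T₁ T₂ ((n+1)::rest) true ps ↔ ∀ x, ∃ y, DupWinsSched T₁ T₂ (n::rest) true ((x,y)::ps) := by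
  rw [DupWinsSched]; simp
theorem dws_succ_false {n rest ps} : DupWinsSched T₁ T₂ ((n+1)::rest) false ps ↔ ∀ y, ∃ x, DupWinsSched T₁ T₂ (n::rest) false ((x,y)::ps) := by
  rw [DupWinsSched]; simp

theorem mem_cons_mono {α : Type _} {a : α} {ps qs : List α} (h : ∀ p ∈ qs, p ∈ ps) :
    ∀ p ∈ a :: qs, p ∈ a :: ps := by
  intro p hp
  rcases List.mem_cons.1 hp with h1 | h1
  · exact List.mem_cons.2 (Or.inl h1)
  · exact List.mem_cons.2 (Or.inr (h p h1))

theorem goodPairs_mono {ps qs : List (T₁.V × T₂.V)} (h : ∀ p ∈ qs, p ∈ ps) :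
    GoodPairs T₁ T₂ ps → GoodPairs T₁ T₂ qs := fun H p hp q hq => H p (h p hp) q (h q hq)

theorem dws_mono : ∀ (sched : List ℕ) (side : Bool) (ps qs : List (T₁.V × T₂.V)),
    (∀ p ∈ qs, p ∈ ps) → DupWinsSched T₁ T₂ sched side ps → DupWinsSched T₁ T₂ sched side qs := by
  intro sched
  induction sched with
  | nil =>
    intro side ps qs h H
    rw [dws_nil] at *
    exact goodPairs_mono h H
  | cons n rest ih =>
    induction n with
    | zero =>
      intro side ps qs h H
      rw [dws_zero] at *
      exact ih _ _ _ h H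
    | succ n ihn =>
      intro side ps qs h H
      cases side with
      | true =>
        rw [dws_succ_true] at *
        intro x
        obtain ⟨y, hy⟩ := H x
        exact ⟨y, ihn _ _ _ (mem_cons_mono h) hy⟩
      | false =>
        rw [dws_succ_false] at *
        intro y
        obtain ⟨x, hx⟩ := H y
        exact ⟨x, ihn _ _ _ (mem_cons_mono h) hx⟩

theorem dws_goodPairs : ∀ (sched : List ℕ) (side : Bool) (ps : List (T₁.V × T₂.V)),
    DupWinsSched T₁ T₂ sched side ps → GoodPairs T₁ T₂ ps := by
  intro sched
  induction sched with
  | nil => intro side ps H; rwa [dws_nil] at H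
  | cons n rest ih =>
    induction n with
    | zero => intro side ps H; rw [dws_zero] at H; exact ih _ _ H
    | succ n ihn =>
      intro side ps H
      cases side with
      | true =>
        rw [dws_succ_true] at H
        obtain ⟨y, hy⟩ := H T₁.root
        exact goodPairs_mono (fun p hp => List.mem_cons.2 (Or.inr hp)) (ihn _ _ hy)
      | false =>
        rw [dws_succ_false] at H
        obtain ⟨x, hx⟩ := H T₂.root
        exact goodPairs_mono (fun p hp => List.mem_cons.2 (Or.inr hp)) (ihn _ _ hx)

theorem dws_pred {n : ℕ} {rest side ps} (H : DupWinsSched T₁ T₂ ((n+1)::rest) side ps) :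
    DupWinsSched T₁ T₂ (n::rest) side ps := by
  cases side with
  | true =>
    rw [dws_succ_true] at H
    obtain ⟨y, hy⟩ := H T₁.root
    exact dws_mono _ _ _ _ (fun p hp => List.mem_cons.2 (Or.inr hp)) hy
  | false =>
    rw [dws_succ_false] at H
    obtain ⟨x, hx⟩ := H T₂.root
    exact dws_mono _ _ _ _ (fun p hp => List.mem_cons.2 (Or.inr hp)) hx

theorem dws_head_le {j n : ℕ} (hjn : j ≤ n) {rest side ps}
    (H : DupWinsSched T₁ T₂ (n::rest) side ps) : DupWinsSched T₁ T₂ (j::rest) side ps := by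
  induction n with
  | zero => cases Nat.le_zero.1 hjn; exact H
  | succ n ih =>
    rcases Nat.lt_or_ge j (n+1) with h | h
    · exact ih (Nat.lt_succ_iff.1 h) (dws_pred H)
    · cases Nat.le_antisymm hjn h; exact H

theorem dws_prefix : ∀ (sched extra : List ℕ) (side : Bool) (ps : List (T₁.V × T₂.V)),
    DupWinsSched T₁ T₂ (sched ++ extra) side ps → DupWinsSched T₁ T₂ sched side ps := by
  intro sched
  induction sched with
  | nil => intro extra side ps H; rw [dws_nil]; exact dws_goodPairs _ _ _ H
  | cons n rest ih =>
    induction n with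
    | zero =>
      intro extra side ps H
      rw [List.cons_append, dws_zero] at H
      rw [dws_zero]
      exact ih _ _ _ H
    | succ n ihn =>
      intro extra side ps H
      rw [List.cons_append] at H
      cases side with
      | true =>
        rw [dws_succ_true] at H ⊢
        intro x
        obtain ⟨y, hy⟩ := H x
        exact ⟨y, ihn _ _ _ (by rw [List.cons_append]; exact hy)⟩
      | false =>
        rw [dws_succ_false] at H ⊢
        intro y
        obtain ⟨x, hx⟩ := H y
        exact ⟨x, ihn _ _ _ (by rw [List.cons_append]; exact hx)⟩

theorem goodPairs_swap {ps : List (T₁.V × T₂.V)} (H : GoodPairs T₁ T₂ ps) :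
    GoodPairs T₂ T₁ (ps.map Prod.swap) := by
  intro p hp q hq
  obtain ⟨p', hp', rfl⟩ := List.mem_map.1 hp
  obtain ⟨q', hq', rfl⟩ := List.mem_map.1 hq
  obtain ⟨h1, h2⟩ := H p' hp' q' hq'
  exact ⟨h1.symm, h2.symm⟩

theorem dws_swap : ∀ (sched : List ℕ) (side : Bool) (ps : List (T₁.V × T₂.V)),
    DupWinsSched T₁ T₂ sched side ps → DupWinsSched T₂ T₁ sched (!side) (ps.map Prod.swap) := by
  intro sched
  induction sched with
  | nil => intro side ps H; rw [dws_nil] at *; exact goodPairs_swap H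
  | cons n rest ih =>
    induction n with
    | zero =>
      intro side ps H
      rw [dws_zero] at *
      exact ih _ _ H
    | succ n ihn =>
      intro side ps H
      cases side with
      | true =>
        rw [dws_succ_true] at H
        rw [show (!true) = false from rfl, dws_succ_false]
        intro y
        obtain ⟨x, hx⟩ := H y
        refine ⟨x, ?_⟩
        have := ihn _ _ hx
        rw [show (!true) = false from rfl] at this
        simpa using this
      | false =>
        rw [dws_succ_false] at H
        rw [show (!false) = true from rfl, dws_succ_true]
        intro x
        obtain ⟨y, hy⟩ := H x
        refine ⟨y, ?_⟩
        have := ihn _ _ hy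
        rw [show (!false) = true from rfl] at this
        simpa using this

end EhrAux
namespace EhrAux

/-- Identity-like iso from an equality of trees. -/
def isoOfEq {S T : RTree} (h : S = T) : TreeIso S T := by
  subst h
  refine ⟨Equiv.refl _, rfl, fun v => ?_⟩
  show Option.map id (S.parent v) = S.parent v
  rw [Option.map_id]
  rfl

def _root_.TreeIso.symm {S T : RTree} (e : TreeIso S T) : TreeIso T S where
  toEquiv := e.toEquiv.symm
  map_root := by
    rw [← e.map_root, Equiv.symm_apply_apply]
  map_parent := by
    intro v
    have h := e.map_parent (e.toEquiv.symm v)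
    rw [Equiv.apply_symm_apply] at h
    rw [← h, Option.map_map]
    simp
def _root_.TreeIso.trans {S T U : RTree} (e : TreeIso S T) (f : TreeIso T U) : TreeIso S U where
  toEquiv := e.toEquiv.trans f.toEquiv
  map_root := by simp [Equiv.trans_apply, e.map_root, f.map_root]
  map_parent := by
    intro v
    simp only [Equiv.trans_apply]
    rw [← f.map_parent, ← e.map_parent, Option.map_map]
    rfl

theorem iso_parent_iff {S T : RTree} (e : TreeIso S T) {a b : S.V} :
    S.parent a = some b ↔ T.parent (e.toEquiv a) = some (e.toEquiv b) := by
  rw [← e.map_parent]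
  constructor
  · intro h; rw [h]; rfl
  · intro h
    rcases h' : S.parent a with _ | w
    · rw [h'] at h; simp at h
    · rw [h'] at h
      simp only [Option.map_some] at h
      exact congrArg some (e.toEquiv.injective (Option.some.inj h))

variable {T₁ T₂ T₁' T₂' : RTree}

theorem dws_iso (e₁ : TreeIso T₁ T₁') (e₂ : TreeIso T₂ T₂') :
    ∀ (sched : List ℕ) (side : Bool) (ps : List (T₁.V × T₂.V)),
    DupWinsSched T₁ T₂ sched side ps →
    DupWinsSched T₁' T₂' sched side (ps.map fun p => (e₁.toEquiv p.1, e₂.toEquiv p.2)) := by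
  intro sched
  induction sched with
  | nil =>
    intro side ps H
    rw [dws_nil] at *
    intro p hp q hq
    obtain ⟨p', hp', rfl⟩ := List.mem_map.1 hp
    obtain ⟨q', hq', rfl⟩ := List.mem_map.1 hq
    obtain ⟨h1, h2⟩ := H p' hp' q' hq'
    constructor
    · rw [← iso_parent_iff e₁, ← iso_parent_iff e₂]; exact h1
    · rw [e₁.toEquiv.injective.eq_iff, e₂.toEquiv.injective.eq_iff]; exact h2
  | cons n rest ih =>
    induction n with
    | zero => intro side ps H; rw [dws_zero] at *; exact ih _ _ H
    | succ n ihn =>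
      intro side ps H
      cases side with
      | true =>
        rw [dws_succ_true] at *
        intro x
        obtain ⟨y, hy⟩ := H (e₁.toEquiv.symm x)
        refine ⟨e₂.toEquiv y, ?_⟩
        have := ihn _ _ hy
        simpa [Equiv.apply_symm_apply] using this
      | false =>
        rw [dws_succ_false] at *
        intro y
        obtain ⟨x, hx⟩ := H (e₂.toEquiv.symm y)
        refine ⟨e₁.toEquiv x, ?_⟩
        have := ihn _ _ hx
        simpa [Equiv.apply_symm_apply] using this

/-- Duplicator's copying strategy along an isomorphism. -/
theorem dws_ofIso (e : TreeIso T₁ T₂) :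
    ∀ (sched : List ℕ) (side : Bool) (ps : List (T₁.V × T₂.V)),
    (∀ p ∈ ps, p.2 = e.toEquiv p.1) → DupWinsSched T₁ T₂ sched side ps := by
  intro sched
  induction sched with
  | nil =>
    intro side ps h
    rw [dws_nil]
    intro p hp q hq
    rw [h p hp, h q hq]
    constructor
    · exact iso_parent_iff e
    · exact e.toEquiv.injective.eq_iff.symm
  | cons n rest ih =>
    induction n with
    | zero => intro side ps h; rw [dws_zero]; exact ih _ _ h
    | succ n ihn =>
      intro side ps h
      cases side with
      | true =>
        rw [dws_succ_true]
        intro x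
        refine ⟨e.toEquiv x, ihn _ _ ?_⟩
        intro p hp
        rcases List.mem_cons.1 hp with h1 | h1
        · rw [h1]
        · exact h p h1
      | false =>
        rw [dws_succ_false]
        intro y
        refine ⟨e.toEquiv.symm y, ihn _ _ ?_⟩
        intro p hp
        rcases List.mem_cons.1 hp with h1 | h1
        · rw [h1]; simp
        · exact h p h1

/-- When the right tree has a single vertex and no switches remain. -/
theorem dws_single (h2 : ∀ y : T₂.V, y = T₂.root)
    (hp1 : T₁.parent T₁.root = none) (hp2 : T₂.parent T₂.root = none) :
    ∀ (a : ℕ) (ps : List (T₁.V × T₂.V)), (∀ p ∈ ps, p = (T₁.root, T₂.root)) →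
    DupWinsSched T₁ T₂ [a] false ps := by
  intro a
  induction a with
  | zero =>
    intro ps h
    rw [dws_zero, dws_nil]
    intro p hp q hq
    rw [h p hp, h q hq]
    constructor
    · simp [hp1, hp2]
    · simp
  | succ a ih =>
    intro ps h
    rw [dws_succ_false]
    intro y
    refine ⟨T₁.root, ih _ ?_⟩
    intro p hp
    rcases List.mem_cons.1 hp with h1 | h1
    · rw [h1, h2 y]
    · exact h p h1

end EhrAux
namespace EhrAux

def Nice (T : RTree) : Prop :=
  (∀ w, T.parent w = none ↔ w = T.root) ∧ (∀ v, ∃ n, T.parentIter n v = some T.root)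

theorem parentIter_add (T : RTree) (a b : ℕ) (v : T.V) :
    T.parentIter (a + b) v = (T.parentIter a v).bind (T.parentIter b) := by
  induction a generalizing v with
  | zero => simp [RTree.parentIter]
  | succ a ih =>
    have : a + 1 + b = (a + b) + 1 := by omega
    rw [this]
    show (T.parent v).bind (T.parentIter (a+b)) = _
    show _ = ((T.parent v).bind (T.parentIter a)).bind (T.parentIter b)
    cases T.parent v with
    | none => rfl
    | some w => simp [ih w]

section ALLemmas
variable {T : RTree}

theorem iter_root (hroot : T.parent T.root = none) {n : ℕ} {w : T.V} (h : T.parentIter n T.root = some w) : n = 0 ∧ w = T.root := by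
  cases n with
  | zero => exact ⟨rfl, (Option.some.inj h).symm⟩
  | succ n =>
    exfalso
    have : T.parentIter (n+1) T.root = (T.parent T.root).bind (T.parentIter n) := rfl
    rw [this, hroot] at h
    simp at h

theorem child_ne_root (hroot : T.parent T.root = none) {c : T.V} (hc : T.parent c = some T.root) : c ≠ T.root := by
  intro h; rw [h, hroot] at hc; exact Option.noConfusion rfl (heq_of_eq hc)

theorem not_desc_root (hroot : T.parent T.root = none) {c : T.V} (hc : T.parent c = some T.root) : ¬ T.IsDesc c T.root := by
  rintro ⟨n, hn⟩
  obtain ⟨-, rfl⟩ := iter_root hroot hn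
  exact child_ne_root hroot hc rfl

theorem desc_unique (hroot : T.parent T.root = none) {c₁ c₂ x : T.V} (hc₁ : T.parent c₁ = some T.root)
    (hc₂ : T.parent c₂ = some T.root) (h₁ : T.IsDesc c₁ x) (h₂ : T.IsDesc c₂ x) : c₁ = c₂ := by
  obtain ⟨n₁, hn₁⟩ := h₁
  obtain ⟨n₂, hn₂⟩ := h₂
  have key : ∀ (a b : T.V) (j₁ j₂ : ℕ), j₁ ≤ j₂ → T.parent a = some T.root →
      T.parent b = some T.root →
      T.parentIter j₁ x = some a → T.parentIter j₂ x = some b → a = b := by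
    intro a b j₁ j₂ hle ha hb hj₁ hj₂
    obtain ⟨d, rfl⟩ := Nat.exists_eq_add_of_le hle
    rw [parentIter_add, hj₁] at hj₂
    simp only [Option.bind_some] at hj₂
    cases d with
    | zero => exact Option.some.inj hj₂
    | succ d =>
      exfalso
      have e : T.parentIter (d+1) a = (T.parent a).bind (T.parentIter d) := rfl
      rw [e, ha] at hj₂
      simp only [Option.bind_some] at hj₂
      obtain ⟨-, rfl⟩ := iter_root hroot hj₂
      exact child_ne_root hroot hb rfl
  rcases Nat.le_total n₁ n₂ with h | h
  · exact key _ _ _ _ h hc₁ hc₂ hn₁ hn₂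
  · exact (key _ _ _ _ h hc₂ hc₁ hn₂ hn₁).symm

theorem desc_parent {c x : T.V} (h : T.IsDesc c x) (hne : x ≠ c) :
    ∃ w, T.parent x = some w ∧ T.IsDesc c w := by
  obtain ⟨n, hn⟩ := h
  cases n with
  | zero => exact absurd (Option.some.inj hn) hne
  | succ n =>
    have : T.parentIter (n+1) x = (T.parent x).bind (T.parentIter n) := rfl
    rw [this] at hn
    cases hw : T.parent x with
    | none => rw [hw] at hn; exact Option.noConfusion rfl (heq_of_eq hn)
    | some w => rw [hw] at hn; exact ⟨w, rfl, n, hn⟩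

theorem desc_of_parent {c x y : T.V} (h : T.parent y = some x) (hd : T.IsDesc c x) :
    T.IsDesc c y := by
  obtain ⟨n, hn⟩ := hd
  refine ⟨n + 1, ?_⟩
  have : T.parentIter (n+1) y = (T.parent y).bind (T.parentIter n) := rfl
  rw [this, h]
  simpa using hn

theorem desc_ne_root (hroot : T.parent T.root = none) {c x : T.V} (hc : T.parent c = some T.root) (h : T.IsDesc c x) :
    x ≠ T.root := by
  intro hx; rw [hx] at h; exact not_desc_root hroot hc h

theorem classify (hreach : ∀ v, ∃ n, T.parentIter n v = some T.root) (x : T.V)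
    (hx : x ≠ T.root) : ∃ c, T.parent c = some T.root ∧ T.IsDesc c x := by
  obtain ⟨n, hn⟩ := hreach x
  induction n generalizing x with
  | zero => exact absurd (Option.some.inj hn) hx
  | succ n ih =>
    have : T.parentIter (n+1) x = (T.parent x).bind (T.parentIter n) := rfl
    rw [this] at hn
    cases hw : T.parent x with
    | none => rw [hw] at hn; exact Option.noConfusion rfl (heq_of_eq hn)
    | some w =>
      rw [hw] at hn
      simp only [Option.bind_some] at hn
      by_cases hwr : w = T.root
      · exact ⟨x, by rw [hw, hwr], 0, rfl⟩
      · obtain ⟨c, hc, hd⟩ := ih w hwr hn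
        exact ⟨c, hc, desc_of_parent hw hd⟩

theorem parent_eq_root_iff (hroot : T.parent T.root = none) {c x : T.V} (hc : T.parent c = some T.root) (h : T.IsDesc c x) :
    T.parent x = some T.root ↔ x = c := by
  constructor
  · intro hp
    by_contra hne
    obtain ⟨w, hw, hdw⟩ := desc_parent h hne
    rw [hp] at hw
    obtain rfl := Option.some.inj hw
    exact not_desc_root hroot hc hdw
  · intro h'; rw [h']; exact hc

theorem subtree_parent_iff (hroot : T.parent T.root = none) {c : T.V} (hc : T.parent c = some T.root)
    {x' x : T.V} (h' : T.IsDesc c x') (h : T.IsDesc c x) :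
    (T.subtree c).parent ⟨x', h'⟩ = some ⟨x, h⟩ ↔ T.parent x' = some x := by
  by_cases hec : x' = c
  · subst hec
    have l : (T.subtree x').parent ⟨x', h'⟩ = none := by simp [RTree.subtree]
    rw [l]
    constructor
    · intro hfalse; exact Option.noConfusion rfl (heq_of_eq hfalse)
    · intro hp
      exfalso
      rw [hc] at hp
      exact desc_ne_root hroot hc h (Option.some.inj hp).symm
  · obtain ⟨w, hw, hdw⟩ := desc_parent h' hec
    have l : (T.subtree c).parent ⟨x', h'⟩ = some ⟨w, hdw⟩ := by
      simp only [RTree.subtree, if_neg hec, hw, Option.bind_some, dif_pos hdw]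
    rw [l, hw]
    constructor
    · intro hh
      exact congrArg some (congrArg Subtype.val (Option.some.inj hh))
    · intro hh
      obtain rfl := Option.some.inj hh
      rfl

theorem subtree_root_parent {c : T.V} :
    (T.subtree c).parent (T.subtree c).root = none := by simp [RTree.subtree]

end ALLemmas

/-! hang lemmas -/
section HangLemmas
variable {n : ℕ} {f : Fin n → RTree}

theorem hang_parent_inr {i : Fin n} {w : (f i).V} :
    (hang n f).parent (Sum.inr ⟨i, w⟩) =
      match (f i).parent w with
      | none => some (Sum.inl ())
      | some w' => some (Sum.inr ⟨i, w'⟩) := rfl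

theorem hang_parent_inr_none {i : Fin n} {w : (f i).V} (h : (f i).parent w = none) :
    (hang n f).parent (Sum.inr ⟨i, w⟩) = some (Sum.inl ()) := by
  rw [hang_parent_inr, h]
  rfl

theorem hang_parent_inr_some {i : Fin n} {w w' : (f i).V} (h : (f i).parent w = some w') :
    (hang n f).parent (Sum.inr ⟨i, w⟩) = some (Sum.inr ⟨i, w'⟩) := by
  rw [hang_parent_inr, h]
  rfl

theorem hang_iter {i : Fin n} {j : ℕ} {w w' : (f i).V} (h : (f i).parentIter j w = some w') :
    (hang n f).parentIter j (Sum.inr ⟨i, w⟩) = some (Sum.inr ⟨i, w'⟩) := by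
  induction j generalizing w with
  | zero => exact congrArg some (congrArg _ (congrArg _ (Option.some.inj h)))
  | succ j ih =>
    have e : (f i).parentIter (j+1) w = ((f i).parent w).bind ((f i).parentIter j) := rfl
    rw [e] at h
    cases hw : (f i).parent w with
    | none => rw [hw] at h; exact Option.noConfusion rfl (heq_of_eq h)
    | some w1 =>
      rw [hw] at h
      simp only [Option.bind_some] at h
      have e2 : (hang n f).parentIter (j+1) (Sum.inr ⟨i, w⟩) =
          ((hang n f).parent (Sum.inr ⟨i, w⟩)).bind ((hang n f).parentIter j) := rfl
      rw [e2, hang_parent_inr_some hw]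
      exact ih h

theorem hang_iter_inl {j : ℕ} {z : Unit ⊕ (Σ i : Fin n, (f i).V)}
    (h : (hang n f).parentIter j (Sum.inl ()) = some z) : z = Sum.inl () := by
  cases j with
  | zero => exact (Option.some.inj h).symm
  | succ j =>
    exfalso
    have e : (hang n f).parentIter (j+1) (Sum.inl ()) =
        ((hang n f).parent (Sum.inl ())).bind ((hang n f).parentIter j) := rfl
    rw [e] at h
    exact Option.noConfusion rfl (heq_of_eq h)

theorem hang_iter_inr_inv {i j : Fin n} {d : ℕ} {w : (f i).V} {w' : (f j).V}
    (h : (hang n f).parentIter d (Sum.inr ⟨i, w⟩) = some (Sum.inr ⟨j, w'⟩)) :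
    ∃ hij : i = j, (f i).parentIter d w = some (hij ▸ w') := by
  induction d generalizing w with
  | zero =>
    obtain ⟨hij, hw⟩ := Sigma.mk.inj_iff.1 (Sum.inr.inj (Option.some.inj h))
    subst hij
    exact ⟨rfl, congrArg some (eq_of_heq hw)⟩
  | succ d ih =>
    have e : (hang n f).parentIter (d+1) (Sum.inr ⟨i, w⟩) =
        ((hang n f).parent (Sum.inr ⟨i, w⟩)).bind ((hang n f).parentIter d) := rfl
    rw [e] at h
    cases hw : (f i).parent w with
    | none =>
      exfalso
      rw [hang_parent_inr_none hw] at h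
      change (hang n f).parentIter d (Sum.inl ()) = _ at h
      exact Sum.noConfusion rfl rfl (heq_of_eq (hang_iter_inl h))
    | some w1 =>
      rw [hang_parent_inr_some hw] at h
      change (hang n f).parentIter d (Sum.inr ⟨i, w1⟩) = _ at h
      obtain ⟨hij, hiter⟩ := ih h
      subst hij
      refine ⟨rfl, ?_⟩
      have e2 : (f i).parentIter (d+1) w = ((f i).parent w).bind ((f i).parentIter d) := rfl
      rw [e2, hw]
      simpa using hiter

theorem hang_nice (hf : ∀ i, Nice (f i)) : Nice (hang n f) := by
  constructor
  · intro z
    match z with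
    | Sum.inl () => simp [hang]
    | Sum.inr ⟨i, w⟩ =>
      rw [hang_parent_inr]
      cases hw : (f i).parent w <;> simp [hang]
  · intro z
    match z with
    | Sum.inl () => exact ⟨0, rfl⟩
    | Sum.inr ⟨i, w⟩ =>
      obtain ⟨j, hj⟩ := (hf i).2 w
      refine ⟨j + 1, ?_⟩
      refine (parentIter_add (hang n f) j 1 _).trans ?_
      rw [hang_iter hj]
      change (hang n f).parentIter 1 (Sum.inr ⟨i, (f i).root⟩) = some (hang n f).root
      have : (hang n f).parentIter 1 (Sum.inr ⟨i, (f i).root⟩) =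
          ((hang n f).parent (Sum.inr ⟨i, (f i).root⟩)).bind ((hang n f).parentIter 0) := rfl
      rw [this, hang_parent_inr_none (((hf i).1 _).2 rfl)]
      rfl

/-- The `i`-th child of the root of `hang n f`. -/
def childVert (f : Fin n → RTree) (i : Fin n) : (hang n f).V := Sum.inr ⟨i, (f i).root⟩

theorem hang_child_parent (hf : ∀ i, Nice (f i)) (i : Fin n) :
    (hang n f).parent (childVert f i) = some (hang n f).root :=
  hang_parent_inr_none (((hf i).1 _).2 rfl)

theorem hang_child_inj : Function.Injective (childVert f) := by
  intro i j h
  exact (Sigma.mk.inj_iff.1 (Sum.inr.inj h)).1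

theorem hang_child_surj (hf : ∀ i, Nice (f i)) (z : (hang n f).V)
    (hz : (hang n f).parent z = some (hang n f).root) : ∃ i, z = childVert f i := by
  match z with
  | Sum.inl () => exact Option.noConfusion rfl (heq_of_eq hz)
  | Sum.inr ⟨i, w⟩ =>
    cases hw : (f i).parent w with
    | none =>
      refine ⟨i, ?_⟩
      rw [((hf i).1 w).1 hw]
      rfl
    | some w1 =>
      rw [hang_parent_inr_some hw] at hz
      exact Sum.noConfusion rfl rfl (heq_of_eq (Option.some.inj hz))

theorem hang_desc_iff (hf : ∀ i, Nice (f i)) (i : Fin n) (z : (hang n f).V) :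
    (hang n f).IsDesc (childVert f i) z ↔ ∃ w, z = Sum.inr ⟨i, w⟩ := by
  constructor
  · rintro ⟨d, hd⟩
    match z with
    | Sum.inl () => exact absurd (hang_iter_inl hd) (by simp [childVert])
    | Sum.inr ⟨j, w⟩ =>
      obtain ⟨hij, -⟩ := hang_iter_inr_inv hd
      subst hij
      exact ⟨w, rfl⟩
  · rintro ⟨w, rfl⟩
    obtain ⟨j, hj⟩ := (hf i).2 w
    exact ⟨j, hang_iter hj⟩

noncomputable def hangSubtreeIso (hf : ∀ j, Nice (f j)) (i : Fin n) :
    TreeIso ((hang n f).subtree (childVert f i)) (f i) := by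
  classical
  have hdesc : ∀ w : (f i).V, (hang n f).IsDesc (childVert f i) (Sum.inr ⟨i, w⟩) :=
    fun w => (hang_desc_iff hf i _).2 ⟨w, rfl⟩
  let g : (f i).V → ((hang n f).subtree (childVert f i)).V := fun w => ⟨Sum.inr ⟨i, w⟩, hdesc w⟩
  have hg : Function.Bijective g := by
    constructor
    · intro a b hab
      have := congrArg Subtype.val hab
      exact eq_of_heq (Sigma.mk.inj_iff.1 (Sum.inr.inj this)).2
    · rintro ⟨z, hz⟩
      obtain ⟨w, rfl⟩ := (hang_desc_iff hf i z).1 hz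
      exact ⟨w, rfl⟩
  refine ⟨(Equiv.ofBijective g hg).symm, ?_, ?_⟩
  · show (Equiv.ofBijective g hg).symm ((hang n f).subtree (childVert f i)).root = (f i).root
    have h0 : ((hang n f).subtree (childVert f i)).root = g (f i).root := rfl
    rw [h0, Equiv.ofBijective_symm_apply_apply]
  · intro z
    obtain ⟨w, rfl⟩ := hg.2 z
    have hzw : (Equiv.ofBijective g hg).symm (g w) = w := Equiv.ofBijective_symm_apply_apply _ _ _
    rw [hzw]
    cases hw : (f i).parent w with
    | none =>
      have hwr : w = (f i).root := ((hf i).1 w).1 hw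
      subst hwr
      have h1 : ((hang n f).subtree (childVert f i)).parent (g ((f i).root)) = none := by
        simp only [RTree.subtree]
        exact if_pos rfl
      rw [h1]
      rfl
    | some w1 =>
      have hne : (Sum.inr ⟨i, w⟩ : (hang n f).V) ≠ childVert f i := by
        intro hcon
        have hwr : w = (f i).root := eq_of_heq (Sigma.mk.inj_iff.1 (Sum.inr.inj hcon)).2
        rw [hwr, ((hf i).1 _).2 rfl] at hw
        exact Option.noConfusion rfl (heq_of_eq hw)
      have h1 : ((hang n f).subtree (childVert f i)).parent (g w) = some (g w1) := by
        simp only [RTree.subtree, g]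
        refine (if_neg hne).trans ?_
        rw [hang_parent_inr_some hw]
        exact dif_pos (hdesc w1)
      rw [h1]
      simp only [Option.map_some]
      rw [Equiv.ofBijective_symm_apply_apply]

end HangLemmas

theorem nice_single : Nice single := by
  constructor
  · intro w; constructor
    · intro _; rfl
    · intro _; rfl
  · intro v; exact ⟨0, rfl⟩

theorem treePair_nice (m : ℕ) : ∀ r, Nice (TreePair m r).1 ∧ Nice (TreePair m r).2 := by
  intro r
  induction r with
  | zero => exact ⟨nice_single, hang_nice fun _ => nice_single⟩
  | succ r ih =>
    constructor
    · exact hang_nice fun _ => ih.2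
    · refine hang_nice fun i => ?_
      by_cases h : i.1 = m
      · simp only [TreePair, h, if_pos]
        exact ih.1
      · simp only [TreePair, if_neg h]
        exact ih.2

end EhrAux
namespace EhrAux

open Classical in
noncomputable def innerOf (A B : RTree) (a' : A.V) (b' : B.V) (ps : List (A.V × B.V)) :
    List ((A.subtree a').V × (B.subtree b').V) :=
  ps.filterMap fun p =>
    if h : A.IsDesc a' p.1 ∧ B.IsDesc b' p.2 then some (⟨p.1, h.1⟩, ⟨p.2, h.2⟩) else none

theorem innerOf_nil {A B : RTree} {a' : A.V} {b' : B.V} : innerOf A B a' b' [] = [] := rfl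

theorem innerOf_cons_pos {A B : RTree} {a' : A.V} {b' : B.V} {p : A.V × B.V}
    {ps : List (A.V × B.V)} (h1 : A.IsDesc a' p.1) (h2 : B.IsDesc b' p.2) :
    innerOf A B a' b' (p :: ps) = (⟨p.1, h1⟩, ⟨p.2, h2⟩) :: innerOf A B a' b' ps := by
  unfold innerOf
  rw [List.filterMap_cons, dif_pos ⟨h1, h2⟩]

theorem innerOf_cons_neg {A B : RTree} {a' : A.V} {b' : B.V} {p : A.V × B.V}
    {ps : List (A.V × B.V)} (h : ¬ (A.IsDesc a' p.1 ∧ B.IsDesc b' p.2)) :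
    innerOf A B a' b' (p :: ps) = innerOf A B a' b' ps := by
  unfold innerOf
  rw [List.filterMap_cons, dif_neg h]

theorem mem_innerOf {A B : RTree} {a' : A.V} {b' : B.V} {p : A.V × B.V}
    {ps : List (A.V × B.V)} (hp : p ∈ ps) (h1 : A.IsDesc a' p.1) (h2 : B.IsDesc b' p.2) :
    ((⟨p.1, h1⟩, ⟨p.2, h2⟩) : (A.subtree a').V × (B.subtree b').V) ∈ innerOf A B a' b' ps := by
  unfold innerOf
  apply List.mem_filterMap.2
  exact ⟨p, hp, by rw [dif_pos ⟨h1, h2⟩]⟩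

/-- The game-position invariant. -/
def Inv (A B : RTree) (m : ℕ) (u : Fin (m+1) → A.V) (v : Fin (m+1) → B.V)
    (k Bud a b : ℕ) (side : Bool) (ps : List (A.V × B.V)) : Prop :=
  ∃ M : Fin (m+1) → Option (Fin (m+1)),
    (∀ t₁ t₂ t', M t₁ = some t' → M t₂ = some t' → t₁ = t₂) ∧
    (∀ p ∈ ps, p = (A.root, B.root) ∨
      ∃ t t', M t = some t' ∧ A.IsDesc (u t) p.1 ∧ B.IsDesc (v t') p.2) ∧
    (∀ t t', M t = some t' →
      DupWinsSched (A.subtree (u t)) (B.subtree (v t')) (a :: List.replicate b k) side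
        (innerOf A B (u t) (v t') ps ++
          [((A.subtree (u t)).root, (B.subtree (v t')).root)])) ∧
    ((Finset.univ.filter fun t => (M t).isSome).card + (a + b * k) ≤ Bud)

section Transfer
variable {A B : RTree} {m : ℕ} {u : Fin (m+1) → A.V} {v : Fin (m+1) → B.V}

theorem cross_false {T : RTree} (hroot : T.parent T.root = none) {c₁ c₂ x y : T.V}
    (hc₁ : T.parent c₁ = some T.root) (hc₂ : T.parent c₂ = some T.root) (hne : c₁ ≠ c₂)
    (h1 : T.IsDesc c₁ x) (h2 : T.IsDesc c₂ y) : T.parent x ≠ some y := by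
  intro hp
  by_cases hx : x = c₁
  · rw [hx, hc₁] at hp
    exact desc_ne_root hroot hc₂ h2 (Option.some.inj hp).symm
  · obtain ⟨w, hw, hdw⟩ := desc_parent h1 hx
    rw [hw] at hp
    obtain rfl := Option.some.inj hp
    exact hne (desc_unique hroot hc₁ hc₂ hdw h2)

theorem inv_goodPairs
    (hAroot : A.parent A.root = none) (hBroot : B.parent B.root = none)
    (hu_child : ∀ t, A.parent (u t) = some A.root)
    (hv_child : ∀ t', B.parent (v t') = some B.root)
    (hu_inj : Function.Injective u) (hv_inj : Function.Injective v)
    {M : Fin (m+1) → Option (Fin (m+1))}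
    (hMinj : ∀ t₁ t₂ t', M t₁ = some t' → M t₂ = some t' → t₁ = t₂)
    {ps : List (A.V × B.V)}
    (hcover : ∀ p ∈ ps, p = (A.root, B.root) ∨
      ∃ t t', M t = some t' ∧ A.IsDesc (u t) p.1 ∧ B.IsDesc (v t') p.2)
    (hwin : ∀ t t', M t = some t' →
      GoodPairs (A.subtree (u t)) (B.subtree (v t'))
        (innerOf A B (u t) (v t') ps ++
          [((A.subtree (u t)).root, (B.subtree (v t')).root)])) :
    GoodPairs A B ps := by
  intro p hp q hq
  rcases hcover p hp with hpr | ⟨t₁, t₁', hM₁, hpx, hpy⟩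
  · rcases hcover q hq with hqr | ⟨t₂, t₂', hM₂, hqx, hqy⟩
    · rw [hpr, hqr]
      constructor
      · simp only [hAroot, hBroot]
        exact ⟨fun h => Option.noConfusion rfl (heq_of_eq h), fun h => Option.noConfusion rfl (heq_of_eq h)⟩
      · simp
    · rw [hpr]
      constructor
      · simp only [hAroot, hBroot]
        exact ⟨fun h => Option.noConfusion rfl (heq_of_eq h), fun h => Option.noConfusion rfl (heq_of_eq h)⟩
      · constructor
        · intro h; exact absurd h.symm (desc_ne_root hAroot (hu_child t₂) hqx)
        · intro h; exact absurd h.symm (desc_ne_root hBroot (hv_child t₂') hqy)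
  · rcases hcover q hq with hqr | ⟨t₂, t₂', hM₂, hqx, hqy⟩
    · -- p in a group, q the root pair
      rw [hqr]
      have hPmem : ((⟨p.1, hpx⟩, ⟨p.2, hpy⟩) :
          (A.subtree (u t₁)).V × (B.subtree (v t₁')).V) ∈
          innerOf A B (u t₁) (v t₁') ps ++ [((A.subtree (u t₁)).root, (B.subtree (v t₁')).root)] :=
        List.mem_append_left _ (mem_innerOf hp hpx hpy)
      have hRmem : (((A.subtree (u t₁)).root, (B.subtree (v t₁')).root)) ∈
          innerOf A B (u t₁) (v t₁') ps ++ [((A.subtree (u t₁)).root, (B.subtree (v t₁')).root)] :=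
        List.mem_append_right _ (List.mem_singleton.2 rfl)
      have hGP := hwin t₁ t₁' hM₁ _ hPmem _ hRmem
      constructor
      · rw [parent_eq_root_iff hAroot (hu_child t₁) hpx,
            parent_eq_root_iff hBroot (hv_child t₁') hpy]
        have h2 := hGP.2
        exact ⟨fun h => congrArg Subtype.val (h2.mp (Subtype.ext h)),
               fun h => congrArg Subtype.val (h2.mpr (Subtype.ext h))⟩
      · exact iff_of_false (fun h => (desc_ne_root hAroot (hu_child t₁) hpx) h)
          (fun h => (desc_ne_root hBroot (hv_child t₁') hpy) h)
    · by_cases hts : t₁ = t₂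
      · subst hts
        have hts' : t₁' = t₂' := by
          have := hM₁.symm.trans hM₂
          exact Option.some.inj this
        subst hts'
        have hPmem : ((⟨p.1, hpx⟩, ⟨p.2, hpy⟩) :
            (A.subtree (u t₁)).V × (B.subtree (v t₁')).V) ∈
            innerOf A B (u t₁) (v t₁') ps ++
              [((A.subtree (u t₁)).root, (B.subtree (v t₁')).root)] :=
          List.mem_append_left _ (mem_innerOf hp hpx hpy)
        have hQmem : ((⟨q.1, hqx⟩, ⟨q.2, hqy⟩) :
            (A.subtree (u t₁)).V × (B.subtree (v t₁')).V) ∈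
            innerOf A B (u t₁) (v t₁') ps ++
              [((A.subtree (u t₁)).root, (B.subtree (v t₁')).root)] :=
          List.mem_append_left _ (mem_innerOf hq hqx hqy)
        have hGP := hwin t₁ t₁' hM₁ _ hPmem _ hQmem
        constructor
        · rw [← subtree_parent_iff hAroot (hu_child t₁) hpx hqx,
              ← subtree_parent_iff hBroot (hv_child t₁') hpy hqy]
          exact hGP.1
        · have h2 := hGP.2
          exact ⟨fun h => congrArg Subtype.val (h2.mp (Subtype.ext h)),
                 fun h => congrArg Subtype.val (h2.mpr (Subtype.ext h))⟩
      · have hts' : t₁' ≠ t₂' := by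
          intro h; subst h
          exact hts (hMinj t₁ t₂ t₁' hM₁ hM₂)
        constructor
        · exact iff_of_false
            (cross_false hAroot (hu_child t₁) (hu_child t₂)
              (fun h => hts (hu_inj h)) hpx hqx)
            (cross_false hBroot (hv_child t₁') (hv_child t₂')
              (fun h => hts' (hv_inj h)) hpy hqy)
        · refine iff_of_false (fun h => ?_) (fun h => ?_)
          · rw [h] at hpx
            exact hts (hu_inj (desc_unique hAroot (hu_child t₁) (hu_child t₂) hpx hqx))
          · rw [h] at hpy
            exact hts' (hv_inj (desc_unique hBroot (hv_child t₁') (hv_child t₂') hpy hqy))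

end Transfer
end EhrAux
namespace EhrAux

theorem exists_unmatched {m : ℕ} {M : Fin (m+1) → Option (Fin (m+1))}
    (hMinj : ∀ t₁ t₂ t', M t₁ = some t' → M t₂ = some t' → t₁ = t₂)
    (t₀' : Fin (m+1)) (h : ∀ t, M t ≠ some t₀') : ∃ t, M t = none := by
  by_contra hc
  push_neg at hc
  have htot : ∀ t, ∃ w, M t = some w := by
    intro t
    cases hMt : M t with
    | none => exact absurd hMt (hc t)
    | some w => exact ⟨w, rfl⟩
  choose F hF using htot
  have hinj : Function.Injective F := by
    intro t₁ t₂ h12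
    exact hMinj t₁ t₂ (F t₁) (hF t₁) (by rw [h12]; exact hF t₂)
  obtain ⟨t, ht⟩ := Finite.surjective_of_injective hinj t₀'
  exact h t (by rw [hF t, ht])

theorem matched_card {m : ℕ} {M : Fin (m+1) → Option (Fin (m+1))}
    (S : Finset (Fin (m+1))) (hall : ∀ t' ∈ S, ∃ t, M t = some t') :
    S.card ≤ (Finset.univ.filter fun t => (M t).isSome).card := by
  classical
  have hall2 : ∀ t' : Fin (m+1), ∃ t, (t' ∈ S → M t = some t') := by
    intro t'
    by_cases h : t' ∈ S
    · obtain ⟨t, ht⟩ := hall t' h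
      exact ⟨t, fun _ => ht⟩
    · exact ⟨0, fun hh => absurd hh h⟩
  choose F hF using hall2
  apply Finset.card_le_card_of_injOn F
  · intro t' ht'
    simp only [Finset.coe_filter, Set.mem_setOf_eq, Finset.mem_filter, Finset.mem_univ, true_and]
    rw [hF t' ht']
    rfl
  · intro t₁' h₁ t₂' h₂ h12
    have e₁ := hF t₁' h₁
    have e₂ := hF t₂' h₂
    rw [h12] at e₁
    exact Option.some.inj (e₁.symm.trans e₂)

theorem unmatched_card_le {m : ℕ} {M : Fin (m+1) → Option (Fin (m+1))} {t : Fin (m+1)}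
    (htn : M t = none) :
    (Finset.univ.filter fun t₁ => (M t₁).isSome).card ≤ m := by
  classical
  have hsub : (Finset.univ.filter fun t₁ => (M t₁).isSome) ⊆ Finset.univ.erase t := by
    intro t₁ ht₁
    simp only [Finset.mem_filter] at ht₁
    apply Finset.mem_erase.2
    refine ⟨?_, Finset.mem_univ _⟩
    intro hc
    rw [hc, htn] at ht₁
    simp at ht₁
  calc (Finset.univ.filter fun t₁ => (M t₁).isSome).card
      ≤ (Finset.univ.erase t).card := Finset.card_le_card hsub
    _ = m := by rw [Finset.card_erase_of_mem (Finset.mem_univ _)]; simp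

theorem update_card {m : ℕ} {M : Fin (m+1) → Option (Fin (m+1))} {t : Fin (m+1)}
    (htn : M t = none) (t' : Fin (m+1)) :
    (Finset.univ.filter fun t₁ =>
        ((if t₁ = t then some t' else M t₁ : Option (Fin (m+1)))).isSome).card
      = (Finset.univ.filter fun t₁ => (M t₁).isSome).card + 1 := by
  classical
  have hset : (Finset.univ.filter fun t₁ =>
      ((if t₁ = t then some t' else M t₁ : Option (Fin (m+1)))).isSome)
      = insert t (Finset.univ.filter fun t₁ => (M t₁).isSome) := by
    ext t₁
    simp only [Finset.mem_filter, Finset.mem_univ, true_and, Finset.mem_insert]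
    by_cases h : t₁ = t
    · simp [h]
    · simp [h]
  rw [hset, Finset.card_insert_of_notMem]
  simp [htn]

theorem update_inj {m : ℕ} {M : Fin (m+1) → Option (Fin (m+1))}
    (hMinj : ∀ t₁ t₂ t', M t₁ = some t' → M t₂ = some t' → t₁ = t₂)
    {t t' : Fin (m+1)} (hfresh : ∀ t₁, M t₁ ≠ some t') :
    ∀ t₁ t₂ w, (if t₁ = t then some t' else M t₁) = some w →
      (if t₂ = t then some t' else M t₂) = some w → t₁ = t₂ := by
  intro t₁ t₂ w h₁ h₂
  by_cases e₁ : t₁ = t <;> by_cases e₂ : t₂ = t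
  · rw [e₁, e₂]
  · exfalso
    rw [if_pos e₁] at h₁
    rw [if_neg e₂] at h₂
    obtain rfl := Option.some.inj h₁
    exact hfresh t₂ h₂
  · exfalso
    rw [if_neg e₁] at h₁
    rw [if_pos e₂] at h₂
    obtain rfl := Option.some.inj h₂
    exact hfresh t₁ h₁
  · rw [if_neg e₁] at h₁
    rw [if_neg e₂] at h₂
    exact hMinj t₁ t₂ w h₁ h₂

section StepHelpers
variable {A B : RTree} {m : ℕ} {u : Fin (m+1) → A.V} {v : Fin (m+1) → B.V}
  {k Bud a b : ℕ} {side : Bool} {ps : List (A.V × B.V)}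
  {M : Fin (m+1) → Option (Fin (m+1))}

theorem innerOf_skip (hAroot : A.parent A.root = none)
    (hu_child : ∀ t, A.parent (u t) = some A.root) (hu_inj : Function.Injective u)
    {t t₁ t₁' : Fin (m+1)} (hne : t₁ ≠ t) {x : A.V} {y : B.V} (hx : A.IsDesc (u t) x) :
    innerOf A B (u t₁) (v t₁') ((x, y) :: ps) = innerOf A B (u t₁) (v t₁') ps :=
  innerOf_cons_neg fun hcon =>
    hne (hu_inj (desc_unique hAroot (hu_child t₁) (hu_child t) hcon.1 hx))

theorem innerOf_skip_root (hAroot : A.parent A.root = none)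
    (hu_child : ∀ t, A.parent (u t) = some A.root)
    {t₁ t₁' : Fin (m+1)} {y : B.V} :
    innerOf A B (u t₁) (v t₁') ((A.root, y) :: ps) = innerOf A B (u t₁) (v t₁') ps :=
  innerOf_cons_neg fun hcon => not_desc_root hAroot (hu_child t₁) hcon.1

theorem innerOf_fresh (hAroot : A.parent A.root = none)
    (hu_child : ∀ t, A.parent (u t) = some A.root) (hu_inj : Function.Injective u)
    (hcover : ∀ p ∈ ps, p = (A.root, B.root) ∨
      ∃ t t', M t = some t' ∧ A.IsDesc (u t) p.1 ∧ B.IsDesc (v t') p.2)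
    {t t' : Fin (m+1)} (htn : M t = none) :
    innerOf A B (u t) (v t') ps = [] := by
  unfold innerOf
  rw [List.filterMap_eq_nil_iff]
  intro p hp
  rw [dif_neg]
  intro hcon
  rcases hcover p hp with hpr | ⟨t₁, t₁', hM₁, hpx, hpy⟩
  · rw [hpr] at hcon
    exact not_desc_root hAroot (hu_child t) hcon.1
  · have : t = t₁ := hu_inj (desc_unique hAroot (hu_child t) (hu_child t₁) hcon.1 hpx)
    rw [this, hM₁] at htn
    exact Option.noConfusion rfl (heq_of_eq htn)

/-- Advance the invariant by a move played in an already matched pair of subtrees. -/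
theorem inv_step_group (hAroot : A.parent A.root = none)
    (hu_child : ∀ t, A.parent (u t) = some A.root) (hu_inj : Function.Injective u)
    (hMinj : ∀ t₁ t₂ t', M t₁ = some t' → M t₂ = some t' → t₁ = t₂)
    (hcover : ∀ p ∈ ps, p = (A.root, B.root) ∨
      ∃ t t', M t = some t' ∧ A.IsDesc (u t) p.1 ∧ B.IsDesc (v t') p.2)
    (hwin : ∀ t t', M t = some t' →
      DupWinsSched (A.subtree (u t)) (B.subtree (v t')) ((a+1) :: List.replicate b k) side
        (innerOf A B (u t) (v t') ps ++
          [((A.subtree (u t)).root, (B.subtree (v t')).root)]))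
    (hcnt : (Finset.univ.filter fun t => (M t).isSome).card + ((a+1) + b * k) ≤ Bud)
    {t t' : Fin (m+1)} (ht : M t = some t') {x : A.V} {y : B.V}
    (hx : A.IsDesc (u t) x) (hy : B.IsDesc (v t') y)
    (hnew : DupWinsSched (A.subtree (u t)) (B.subtree (v t')) (a :: List.replicate b k) side
      ((⟨x, hx⟩, ⟨y, hy⟩) :: (innerOf A B (u t) (v t') ps ++
        [((A.subtree (u t)).root, (B.subtree (v t')).root)]))) :
    Inv A B m u v k Bud a b side ((x, y) :: ps) := by
  refine ⟨M, hMinj, ?_, ?_, ?_⟩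
  · intro p hp
    rcases List.mem_cons.1 hp with h1 | h1
    · exact Or.inr ⟨t, t', ht, by rw [h1]; exact hx, by rw [h1]; exact hy⟩
    · exact hcover p h1
  · intro t₁ t₁' h₁
    by_cases hteq : t₁ = t
    · subst hteq
      obtain rfl : t₁' = t' := Option.some.inj (h₁.symm.trans ht)
      rw [innerOf_cons_pos hx hy]
      exact hnew
    · rw [innerOf_skip hAroot hu_child hu_inj hteq hx]
      exact dws_pred (hwin t₁ t₁' h₁)
  · refine le_trans ?_ hcnt
    have : a + b * k ≤ (a+1) + b * k := by omega
    exact Nat.add_le_add_left this _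

/-- Advance the invariant by a move creating a freshly matched pair of subtrees. -/
theorem inv_step_fresh (hAroot : A.parent A.root = none)
    (hu_child : ∀ t, A.parent (u t) = some A.root) (hu_inj : Function.Injective u)
    (hMinj : ∀ t₁ t₂ t', M t₁ = some t' → M t₂ = some t' → t₁ = t₂)
    (hcover : ∀ p ∈ ps, p = (A.root, B.root) ∨
      ∃ t t', M t = some t' ∧ A.IsDesc (u t) p.1 ∧ B.IsDesc (v t') p.2)
    (hwin : ∀ t t', M t = some t' →
      DupWinsSched (A.subtree (u t)) (B.subtree (v t')) ((a+1) :: List.replicate b k) side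
        (innerOf A B (u t) (v t') ps ++
          [((A.subtree (u t)).root, (B.subtree (v t')).root)]))
    (hcnt : (Finset.univ.filter fun t => (M t).isSome).card + ((a+1) + b * k) ≤ Bud)
    {t t' : Fin (m+1)} (htn : M t = none) (hfresh : ∀ t₁, M t₁ ≠ some t')
    {x : A.V} {y : B.V}
    (hx : A.IsDesc (u t) x) (hy : B.IsDesc (v t') y)
    (hnew : DupWinsSched (A.subtree (u t)) (B.subtree (v t')) (a :: List.replicate b k) side
      ((⟨x, hx⟩, ⟨y, hy⟩) ::
        [((A.subtree (u t)).root, (B.subtree (v t')).root)])) :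
    Inv A B m u v k Bud a b side ((x, y) :: ps) := by
  refine ⟨fun t₁ => if t₁ = t then some t' else M t₁, update_inj hMinj hfresh, ?_, ?_, ?_⟩
  · intro p hp
    rcases List.mem_cons.1 hp with h1 | h1
    · exact Or.inr ⟨t, t', by simp, by rw [h1]; exact hx, by rw [h1]; exact hy⟩
    · rcases hcover p h1 with hpr | ⟨t₁, t₁', hM₁, hpx, hpy⟩
      · exact Or.inl hpr
      · refine Or.inr ⟨t₁, t₁', ?_, hpx, hpy⟩
        have hne : t₁ ≠ t := by
          intro hc; rw [hc, htn] at hM₁; exact Option.noConfusion rfl (heq_of_eq hM₁)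
        simpa [hne] using hM₁
  · intro t₁ t₁' h₁
    by_cases hteq : t₁ = t
    · subst hteq
      simp only [if_pos] at h₁
      obtain rfl : t₁' = t' := Option.some.inj h₁.symm
      rw [innerOf_cons_pos hx hy, innerOf_fresh hAroot hu_child hu_inj hcover htn]
      simpa using hnew
    · simp only [if_neg hteq] at h₁
      rw [innerOf_skip hAroot hu_child hu_inj hteq hx]
      exact dws_pred (hwin t₁ t₁' h₁)
  · rw [update_card htn t']
    refine le_trans ?_ hcnt
    have : a + b * k ≤ (a+1) + b * k := by omega
    calc (Finset.univ.filter fun t₁ => (M t₁).isSome).card + 1 + (a + b * k)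
        ≤ (Finset.univ.filter fun t₁ => (M t₁).isSome).card + 1 + (a + b * k) := le_rfl
      _ ≤ (Finset.univ.filter fun t₁ => (M t₁).isSome).card + ((a+1) + b*k) := by omega

/-- Advance the invariant by the root move. -/
theorem inv_step_root (hAroot : A.parent A.root = none)
    (hu_child : ∀ t, A.parent (u t) = some A.root)
    (hMinj : ∀ t₁ t₂ t', M t₁ = some t' → M t₂ = some t' → t₁ = t₂)
    (hcover : ∀ p ∈ ps, p = (A.root, B.root) ∨
      ∃ t t', M t = some t' ∧ A.IsDesc (u t) p.1 ∧ B.IsDesc (v t') p.2)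
    (hwin : ∀ t t', M t = some t' →
      DupWinsSched (A.subtree (u t)) (B.subtree (v t')) ((a+1) :: List.replicate b k) side
        (innerOf A B (u t) (v t') ps ++
          [((A.subtree (u t)).root, (B.subtree (v t')).root)]))
    (hcnt : (Finset.univ.filter fun t => (M t).isSome).card + ((a+1) + b * k) ≤ Bud) :
    Inv A B m u v k Bud a b side ((A.root, B.root) :: ps) := by
  refine ⟨M, hMinj, ?_, ?_, ?_⟩
  · intro p hp
    rcases List.mem_cons.1 hp with h1 | h1
    · exact Or.inl h1
    · exact hcover p h1
  · intro t₁ t₁' h₁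
    rw [innerOf_skip_root hAroot hu_child]
    exact dws_pred (hwin t₁ t₁' h₁)
  · refine le_trans ?_ hcnt
    have : a + b * k ≤ (a+1) + b * k := by omega
    exact Nat.add_le_add_left this _

end StepHelpers

theorem rec_root_transfer {C D A' B' : RTree} (eC : TreeIso C A') (eD : TreeIso D B')
    {sched : List ℕ} {side : Bool}
    (h : DupWinsSched D C sched side [(D.root, C.root)]) :
    DupWinsSched A' B' sched (!side) [(A'.root, B'.root)] := by
  have h1 := dws_swap _ side _ h
  have h2 := dws_iso eC eD _ _ _ h1
  simpa [eC.map_root, eD.map_root] using h2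

theorem subsingleton_of_iso_single {B' : RTree} (e : TreeIso B' single) (z : B'.V) :
    z = B'.root := by
  apply e.toEquiv.injective
  have h : ∀ w₁ w₂ : single.V, w₁ = w₂ := by
    intro w₁ w₂
    cases w₁; cases w₂; rfl
  exact h _ _

end EhrAux
namespace EhrAux

theorem move {A B : RTree} {m : ℕ} {u : Fin (m+1) → A.V} {v : Fin (m+1) → B.V}
    {k Bud rp : ℕ} (hk : 1 ≤ k) (hrm : k * (rp+1) ≤ m) (hBud : Bud ≤ k + k * (rp+1))
    (hAnice : Nice A) (hBnice : Nice B)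
    (hu_child : ∀ t, A.parent (u t) = some A.root)
    (hv_child : ∀ t', B.parent (v t') = some B.root)
    (hu_inj : Function.Injective u) (hv_inj : Function.Injective v)
    (hu_surj : ∀ w, A.parent w = some A.root → ∃ t, w = u t)
    (hv_surj : ∀ w, B.parent w = some B.root → ∃ t', w = v t')
    (φ : ∀ (t t' : Fin (m+1)), t'.1 < m → TreeIso (A.subtree (u t)) (B.subtree (v t')))
    (HspecF : ∀ (t : Fin (m+1)) (a' b' : ℕ), a' + 1 ≤ k → b' ≤ rp →
      DupWinsSched (A.subtree (u t)) (B.subtree (v ⟨m, Nat.lt_succ_self m⟩))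
        ((a'+1) :: List.replicate b' k) false
        [((A.subtree (u t)).root, (B.subtree (v ⟨m, Nat.lt_succ_self m⟩)).root)])
    (HspecT : ∀ (t : Fin (m+1)) (a' : ℕ), a' + 1 ≤ k → 1 ≤ rp →
      DupWinsSched (A.subtree (u t)) (B.subtree (v ⟨m, Nat.lt_succ_self m⟩))
        ((a'+1) :: List.replicate 0 k) true
        [((A.subtree (u t)).root, (B.subtree (v ⟨m, Nat.lt_succ_self m⟩)).root)])
    {b : ℕ} {side : Bool} {a : ℕ}
    (ha : a + 1 ≤ k) (hsf : side = false → b ≤ rp)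
    (hs3 : side = true → 2 ≤ rp + 1 ∨ 2 * k ≤ m)
    (IH : ∀ ps, Inv A B m u v k Bud a b side ps →
      DupWinsSched A B (a :: List.replicate b k) side ps)
    (ps : List (A.V × B.V)) (hInv : Inv A B m u v k Bud (a+1) b side ps) :
    DupWinsSched A B ((a+1) :: List.replicate b k) side ps := by
  obtain ⟨M, hMinj, hcover, hwin, hcnt⟩ := hInv
  have hAroot : A.parent A.root = none := (hAnice.1 _).2 rfl
  have hBroot : B.parent B.root = none := (hBnice.1 _).2 rfl
  cases side with
  | false =>
    rw [dws_succ_false]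
    intro y
    by_cases hyr : y = B.root
    · subst hyr
      exact ⟨A.root, IH _ (inv_step_root hAroot hu_child hMinj hcover hwin hcnt)⟩
    · obtain ⟨c, hc, hdc⟩ := classify hBnice.2 y hyr
      obtain ⟨t', rfl⟩ := hv_surj c hc
      by_cases hmt : ∃ t, M t = some t'
      · obtain ⟨t, ht⟩ := hmt
        have hw := hwin t t' ht
        rw [dws_succ_false] at hw
        obtain ⟨x', hx'⟩ := hw ⟨y, hdc⟩
        exact ⟨x'.1, IH _ (inv_step_group hAroot hu_child hu_inj hMinj hcover hwin hcnt
          ht x'.2 hdc hx')⟩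
      · push_neg at hmt
        obtain ⟨t, htn⟩ := exists_unmatched hMinj t' hmt
        by_cases hsp : t'.1 < m
        · -- fresh pair of subtrees, matched via the isomorphism φ t t'
          refine ⟨((φ t t' hsp).toEquiv.symm ⟨y, hdc⟩).1,
            IH _ (inv_step_fresh hAroot hu_child hu_inj hMinj hcover hwin hcnt htn hmt
              ((φ t t' hsp).toEquiv.symm ⟨y, hdc⟩).2 hdc ?_)⟩
          apply dws_ofIso (φ t t' hsp)
          intro p hp
          rcases List.mem_cons.1 hp with h1 | h1
          · rw [h1]
            exact ((φ t t' hsp).toEquiv.apply_symm_apply ⟨y, hdc⟩).symm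
          · rw [List.mem_singleton.1 h1]
            exact ((φ t t' hsp).map_root).symm
        · -- fresh special subtree on the right
          have ht'sp : t' = ⟨m, Nat.lt_succ_self m⟩ := by
            apply Fin.ext
            show t'.1 = m
            have h2 := t'.2
            omega
          subst ht'sp
          have hD := HspecF t a b ha (hsf rfl)
          rw [dws_succ_false] at hD
          obtain ⟨x', hx'⟩ := hD ⟨y, hdc⟩
          exact ⟨x'.1, IH _ (inv_step_fresh hAroot hu_child hu_inj hMinj hcover hwin hcnt
            htn hmt x'.2 hdc hx')⟩
  | true =>
    rw [dws_succ_true]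
    intro x
    by_cases hxr : x = A.root
    · subst hxr
      exact ⟨B.root, IH _ (inv_step_root hAroot hu_child hMinj hcover hwin hcnt)⟩
    · obtain ⟨c, hc, hdc⟩ := classify hAnice.2 x hxr
      obtain ⟨t, rfl⟩ := hu_surj c hc
      cases hMt : M t with
      | some t' =>
        have hw := hwin t t' hMt
        rw [dws_succ_true] at hw
        obtain ⟨y', hy'⟩ := hw ⟨x, hdc⟩
        exact ⟨y'.1, IH _ (inv_step_group hAroot hu_child hu_inj hMinj hcover hwin hcnt
          hMt hdc y'.2 hy')⟩
      | none =>
        by_cases hfree : ∃ t'' : Fin (m+1), t''.1 < m ∧ ∀ t₁, M t₁ ≠ some t''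
        · obtain ⟨t', hsp, hfr⟩ := hfree
          refine ⟨((φ t t' hsp).toEquiv ⟨x, hdc⟩).1,
            IH _ (inv_step_fresh hAroot hu_child hu_inj hMinj hcover hwin hcnt hMt hfr hdc
              ((φ t t' hsp).toEquiv ⟨x, hdc⟩).2 ?_)⟩
          apply dws_ofIso (φ t t' hsp)
          intro p hp
          rcases List.mem_cons.1 hp with h1 | h1
          · rw [h1]
            rfl
          · rw [List.mem_singleton.1 h1]
            exact ((φ t t' hsp).map_root).symm
        · push_neg at hfree
          have hcard : m ≤ (Finset.univ.filter fun t₁ => (M t₁).isSome).card := by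
            have h1 := matched_card (M := M) (Finset.univ.erase ⟨m, Nat.lt_succ_self m⟩) ?_
            · calc m = (Finset.univ.erase (⟨m, Nat.lt_succ_self m⟩ : Fin (m+1))).card := by
                    rw [Finset.card_erase_of_mem (Finset.mem_univ _)]
                    simp
                _ ≤ _ := h1
            · intro t'' ht''
              apply hfree
              have h2 := Finset.mem_erase.1 ht''
              have h3 : t''.1 ≠ m := by
                intro hh
                apply h2.1
                apply Fin.ext
                show t''.1 = m
                exact hh
              have h4 := t''.2
              omega
          have hle := unmatched_card_le hMt
          have key : (a+1) + b * k ≤ k := by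
            have h5 := hcnt
            have h6 := hBud
            linarith
          have hb0 : b = 0 := by
            by_contra hb
            have h1 : 1 ≤ b := Nat.one_le_iff_ne_zero.2 hb
            have h2 : k ≤ b * k := Nat.le_mul_of_pos_left k h1
            linarith
          subst hb0
          have hrp1 : 1 ≤ rp := by
            rcases hs3 rfl with h | h
            · omega
            · by_contra h0
              have hrp0 : rp = 0 := by omega
              rw [hrp0] at hBud
              have h2 : k * (0 + 1) = k := by ring
              rw [h2] at hBud
              have h3 : (0:ℕ) * k = 0 := by ring
              linarith [hcnt, hcard]
          have hspfree : ∀ t₁, M t₁ ≠ some ⟨m, Nat.lt_succ_self m⟩ := by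
            intro t₁ hsp1
            have hallm : ∀ t'' ∈ (Finset.univ : Finset (Fin (m+1))), ∃ t₂, M t₂ = some t'' := by
              intro t'' _
              by_cases h : t''.1 < m
              · exact hfree t'' h
              · have h4 := t''.2
                have : t'' = ⟨m, Nat.lt_succ_self m⟩ := by
                  apply Fin.ext
                  show t''.1 = m
                  omega
                rw [this]; exact ⟨t₁, hsp1⟩
            have h5 := matched_card Finset.univ hallm
            have h6 : (Finset.univ : Finset (Fin (m+1))).card = m + 1 := by simp
            omega
          have hD := HspecT t a ha hrp1
          rw [dws_succ_true] at hD
          obtain ⟨y', hy'⟩ := hD ⟨x, hdc⟩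
          exact ⟨y'.1, IH _ (inv_step_fresh hAroot hu_child hu_inj hMinj hcover hwin hcnt
            hMt hspfree hdc y'.2 hy')⟩

end EhrAux
namespace EhrAux

theorem step {A B : RTree} {m : ℕ} {u : Fin (m+1) → A.V} {v : Fin (m+1) → B.V}
    {k Bud rp : ℕ} (hk : 1 ≤ k) (hrm : k * (rp+1) ≤ m) (hBud : Bud ≤ k + k * (rp+1))
    (hAnice : Nice A) (hBnice : Nice B)
    (hu_child : ∀ t, A.parent (u t) = some A.root)
    (hv_child : ∀ t', B.parent (v t') = some B.root)
    (hu_inj : Function.Injective u) (hv_inj : Function.Injective v)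
    (hu_surj : ∀ w, A.parent w = some A.root → ∃ t, w = u t)
    (hv_surj : ∀ w, B.parent w = some B.root → ∃ t', w = v t')
    (φ : ∀ (t t' : Fin (m+1)), t'.1 < m → TreeIso (A.subtree (u t)) (B.subtree (v t')))
    (HspecF : ∀ (t : Fin (m+1)) (a' b' : ℕ), a' + 1 ≤ k → b' ≤ rp →
      DupWinsSched (A.subtree (u t)) (B.subtree (v ⟨m, Nat.lt_succ_self m⟩))
        ((a'+1) :: List.replicate b' k) false
        [((A.subtree (u t)).root, (B.subtree (v ⟨m, Nat.lt_succ_self m⟩)).root)])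
    (HspecT : ∀ (t : Fin (m+1)) (a' : ℕ), a' + 1 ≤ k → 1 ≤ rp →
      DupWinsSched (A.subtree (u t)) (B.subtree (v ⟨m, Nat.lt_succ_self m⟩))
        ((a'+1) :: List.replicate 0 k) true
        [((A.subtree (u t)).root, (B.subtree (v ⟨m, Nat.lt_succ_self m⟩)).root)]) :
    ∀ (b : ℕ) (side : Bool) (a : ℕ),
      a ≤ k → (side = false → b ≤ rp) → (side = true → b ≤ rp + 1) →
      (side = true → 2 ≤ rp + 1 ∨ 2 * k ≤ m) →
      ∀ ps, Inv A B m u v k Bud a b side ps →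
      DupWinsSched A B (a :: List.replicate b k) side ps := by
  have hAroot : A.parent A.root = none := (hAnice.1 _).2 rfl
  have hBroot : B.parent B.root = none := (hBnice.1 _).2 rfl
  intro b
  induction b with
  | zero =>
    intro side a
    induction a with
    | zero =>
      intro _ _ _ _ ps hInv
      obtain ⟨M, hMinj, hcover, hwin, hcnt⟩ := hInv
      rw [dws_zero]
      rw [show List.replicate 0 k = ([] : List ℕ) from rfl, dws_nil]
      exact inv_goodPairs hAroot hBroot hu_child hv_child hu_inj hv_inj hMinj hcover
        (fun t t' h => dws_goodPairs _ _ _ (hwin t t' h))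
    | succ a iha =>
      intro ha hsf hst hs3 ps hInv
      exact move hk hrm hBud hAnice hBnice hu_child hv_child hu_inj hv_inj hu_surj hv_surj φ
        HspecF HspecT ha hsf hs3
        (fun ps' h => iha (Nat.le_of_succ_le ha) hsf hst hs3 ps' h) ps hInv
  | succ b ihb =>
    intro side a
    induction a with
    | zero =>
      intro ha hsf hst hs3 ps hInv
      obtain ⟨M, hMinj, hcover, hwin, hcnt⟩ := hInv
      rw [dws_zero, List.replicate_succ]
      refine ihb (!side) k le_rfl ?_ ?_ ?_ ps ⟨M, hMinj, hcover, ?_, ?_⟩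
      · intro hns
        cases side with
        | false => simp at hns
        | true => have := hst rfl; omega
      · intro hns
        cases side with
        | false => have := hsf rfl; omega
        | true => simp at hns
      · intro hns
        cases side with
        | false =>
          have := hsf rfl
          left
          omega
        | true => simp at hns
      · intro t t' h
        have hw := hwin t t' h
        rw [dws_zero, List.replicate_succ] at hw
        exact hw
      · have h1 : (b+1) * k = k + b * k := by ring
        rw [h1] at hcnt
        have h2 : k + b * k = b * k + k := by ring
        calc (Finset.univ.filter fun t => (M t).isSome).card + (k + b * k)
            = (Finset.univ.filter fun t => (M t).isSome).card + (0 + (k + b * k)) := by ring_nf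
          _ ≤ Bud := hcnt
    | succ a iha =>
      intro ha hsf hst hs3 ps hInv
      exact move hk hrm hBud hAnice hBnice hu_child hv_child hu_inj hv_inj hu_surj hv_surj φ
        HspecF HspecT ha hsf hs3
        (fun ps' h => iha (Nat.le_of_succ_le ha) hsf hst hs3 ps' h) ps hInv

end EhrAux
namespace EhrAux

theorem KEY : ∀ (rp : ℕ) (k m : ℕ), 1 ≤ k → k * (rp+1) ≤ m →
    ∀ (u : Fin (m+1) → (Tree1 (rp+1) k m).V) (v : Fin (m+1) → (Tree2 (rp+1) k m).V),
    (∀ t, (Tree1 (rp+1) k m).parent (u t) = some (Tree1 (rp+1) k m).root) →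
    Function.Injective u →
    (∀ w, (Tree1 (rp+1) k m).parent w = some (Tree1 (rp+1) k m).root → ∃ t, w = u t) →
    (∀ t', (Tree2 (rp+1) k m).parent (v t') = some (Tree2 (rp+1) k m).root) →
    Function.Injective v →
    (∀ w, (Tree2 (rp+1) k m).parent w = some (Tree2 (rp+1) k m).root → ∃ t', w = v t') →
    (∀ t, Nonempty (TreeIso ((Tree1 (rp+1) k m).subtree (u t)) (Tree2 rp k m))) →
    Nonempty (TreeIso ((Tree2 (rp+1) k m).subtree (v ⟨m, Nat.lt_succ_self m⟩))
      (Tree1 rp k m)) →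
    ∀ (φ : ∀ (t t' : Fin (m+1)), t'.1 < m →
        TreeIso ((Tree1 (rp+1) k m).subtree (u t)) ((Tree2 (rp+1) k m).subtree (v t'))),
    ∀ (side₀ : Bool) (a₀ b₀ ℓ : ℕ),
      a₀ ≤ k → (side₀ = false → b₀ ≤ rp) → (side₀ = true → b₀ ≤ rp + 1) →
      (side₀ = true → 2 ≤ rp + 1 ∨ 2 * k ≤ m) →
      ℓ + a₀ + b₀ * k ≤ k + k * (rp+1) →
    ∀ (x : Fin ℓ → (Tree1 (rp+1) k m).V) (y : Fin ℓ → (Tree2 (rp+1) k m).V),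
      (∀ i, (∃ t, (Tree1 (rp+1) k m).IsDesc (u t) (x i)) ∧
        (∃ t' : Fin (m+1), t'.1 < m ∧ (Tree2 (rp+1) k m).IsDesc (v t') (y i))) →
      (∀ i j, i ≠ j →
        ((∃ t, (Tree1 (rp+1) k m).IsDesc (u t) (x i) ∧ (Tree1 (rp+1) k m).IsDesc (u t) (x j)) ↔
         (∃ t' : Fin (m+1), t'.1 < m ∧
            (Tree2 (rp+1) k m).IsDesc (v t') (y i) ∧ (Tree2 (rp+1) k m).IsDesc (v t') (y j)))) →
      (∀ i (t t' : Fin (m+1)) (ht' : t'.1 < m)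
        (hx : (Tree1 (rp+1) k m).IsDesc (u t) (x i))
        (_hy : (Tree2 (rp+1) k m).IsDesc (v t') (y i)),
        ((φ t t' ht').toEquiv ⟨x i, hx⟩).1 = y i) →
      DupWinsSched (Tree1 (rp+1) k m) (Tree2 (rp+1) k m) (a₀ :: List.replicate b₀ k) side₀
        ((List.ofFn fun i => (x i, y i)) ++
          [((Tree1 (rp+1) k m).root, (Tree2 (rp+1) k m).root)]) := by
  intro rp
  induction rp using Nat.strong_induction_on with
  | _ rp IH =>
  intro k m hk hrm u v hu_child hu_inj hu_surj hv_child hv_inj hv_surj hu_copy hv_last φ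
    side₀ a₀ b₀ ℓ ha₀ hsf₀ hst₀ hs3₀ hbud x y hIH1 hIH2 hIH3
  classical
  have hAnice := (treePair_nice m (rp+1)).1
  have hBnice := (treePair_nice m (rp+1)).2
  have hAroot : (Tree1 (rp+1) k m).parent (Tree1 (rp+1) k m).root = none := (hAnice.1 _).2 rfl
  have hBroot : (Tree2 (rp+1) k m).parent (Tree2 (rp+1) k m).root = none := (hBnice.1 _).2 rfl
  -- the canonical winning statement one level down
  have Hcanon : ∀ rq, rp = rq + 1 → ∀ (side' : Bool) (a' b' : ℕ), a' + 1 ≤ k →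
      (side' = false → b' ≤ rq) → (side' = true → b' ≤ rq + 1) →
      DupWinsSched (Tree1 (rq+1) k m) (Tree2 (rq+1) k m) ((a'+1) :: List.replicate b' k) side'
        [((Tree1 (rq+1) k m).root, (Tree2 (rq+1) k m).root)] := by
    intro rq hrq side' a' b' ha' hb'f hb't
    have hrm' : k * (rq+1) ≤ m := by
      have h1 : k * (rq+1) ≤ k * (rp+1) := Nat.mul_le_mul_left k (by omega)
      exact le_trans h1 hrm
    have hf1 : ∀ i : Fin (m+1), Nice ((fun _ : Fin (m+1) => (TreePair m rq).2) i) :=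
      fun _ => (treePair_nice m rq).2
    have hf2 : ∀ i : Fin (m+1),
        Nice ((fun i : Fin (m+1) =>
          if i.1 = m then (TreePair m rq).1 else (TreePair m rq).2) i) := by
      intro i
      by_cases h : i.1 = m
      · simp only [if_pos h]; exact (treePair_nice m rq).1
      · simp only [if_neg h]; exact (treePair_nice m rq).2
    have hbud' : 0 + (a'+1) + b' * k ≤ k + k * (rq+1) := by
      have hb : b' ≤ rq + 1 := by
        cases side' with
        | false => exact le_trans (hb'f rfl) (Nat.le_succ _)
        | true => exact hb't rfl
      have h1 : b' * k ≤ (rq+1) * k := Nat.mul_le_mul_right k hb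
      have h2 : (rq+1) * k = k * (rq+1) := Nat.mul_comm _ _
      linarith
    have hD := IH rq (by omega) k m hk hrm'
      (childVert (fun _ : Fin (m+1) => (TreePair m rq).2))
      (childVert (fun i : Fin (m+1) => if i.1 = m then (TreePair m rq).1 else (TreePair m rq).2))
      (hang_child_parent hf1) hang_child_inj (hang_child_surj hf1)
      (hang_child_parent hf2) hang_child_inj (hang_child_surj hf2)
      (fun t => ⟨hangSubtreeIso hf1 t⟩)
      ⟨(hangSubtreeIso hf2 ⟨m, Nat.lt_succ_self m⟩).trans (isoOfEq (if_pos rfl))⟩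
      (fun t t' h => (hangSubtreeIso hf1 t).trans
        (((hangSubtreeIso hf2 t').trans (isoOfEq (if_neg (by omega)))).symm))
      side' (a'+1) b' 0 ha' hb'f hb't
      (fun _ => Or.inr (by
        have h1 : k * 2 ≤ k * (rp+1) := Nat.mul_le_mul_left k (by omega)
        have h2 : 2 * k = k * 2 := Nat.mul_comm _ _
        linarith)) hbud'
      Fin.elim0 Fin.elim0 (fun i => i.elim0) (fun i => i.elim0) (fun i => i.elim0)
    simpa using hD
  -- entering the special subtree, Spoiler on the right
  have HspecF : ∀ (t : Fin (m+1)) (a' b' : ℕ), a' + 1 ≤ k → b' ≤ rp →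
      DupWinsSched ((Tree1 (rp+1) k m).subtree (u t))
        ((Tree2 (rp+1) k m).subtree (v ⟨m, Nat.lt_succ_self m⟩))
        ((a'+1) :: List.replicate b' k) false
        [(((Tree1 (rp+1) k m).subtree (u t)).root,
          ((Tree2 (rp+1) k m).subtree (v ⟨m, Nat.lt_succ_self m⟩)).root)] := by
    intro t a' b' ha' hb'
    rcases Nat.eq_zero_or_pos rp with hrp0 | hrp1
    · subst hrp0
      have hb0 : b' = 0 := Nat.le_zero.1 hb'
      subst hb0
      refine dws_single (fun z => subsingleton_of_iso_single hv_last.some z)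
        subtree_root_parent subtree_root_parent (a'+1) _ ?_
      intro p hp
      rw [List.mem_singleton.1 hp]
    · obtain ⟨rq, hrq⟩ : ∃ rq, rp = rq + 1 := ⟨rp - 1, by omega⟩
      subst hrq
      have hD := Hcanon rq rfl true a' b' ha' (fun h => by simp at h) (fun _ => hb')
      exact rec_root_transfer ((hu_copy t).some.symm) (hv_last.some.symm) hD
  -- entering the special subtree, Spoiler on the left
  have HspecT : ∀ (t : Fin (m+1)) (a' : ℕ), a' + 1 ≤ k → 1 ≤ rp →
      DupWinsSched ((Tree1 (rp+1) k m).subtree (u t))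
        ((Tree2 (rp+1) k m).subtree (v ⟨m, Nat.lt_succ_self m⟩))
        ((a'+1) :: List.replicate 0 k) true
        [(((Tree1 (rp+1) k m).subtree (u t)).root,
          ((Tree2 (rp+1) k m).subtree (v ⟨m, Nat.lt_succ_self m⟩)).root)] := by
    intro t a' ha' hrp1
    obtain ⟨rq, hrq⟩ : ∃ rq, rp = rq + 1 := ⟨rp - 1, by omega⟩
    subst hrq
    have hD := Hcanon rq rfl false a' 0 ha' (fun _ => Nat.zero_le _) (fun h => by simp at h)
    exact rec_root_transfer ((hu_copy t).some.symm) (hv_last.some.symm) hD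
  -- the initial matching induced by the designated pairs
  let M : Fin (m+1) → Option (Fin (m+1)) := fun t =>
    if h : ∃ i, (Tree1 (rp+1) k m).IsDesc (u t) (x i) then
      some (Classical.choose (hIH1 (Classical.choose h)).2)
    else none
  have hMpos : ∀ (t : Fin (m+1)) (h : ∃ i, (Tree1 (rp+1) k m).IsDesc (u t) (x i)),
      M t = some (Classical.choose (hIH1 (Classical.choose h)).2) := fun t h => dif_pos h
  have hMneg : ∀ (t : Fin (m+1)), (¬ ∃ i, (Tree1 (rp+1) k m).IsDesc (u t) (x i)) →
      M t = none := fun t h => dif_neg h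
  have hMdef : ∀ t t', M t = some t' → t'.1 < m ∧
      ∃ i, (Tree1 (rp+1) k m).IsDesc (u t) (x i) ∧ (Tree2 (rp+1) k m).IsDesc (v t') (y i) := by
    intro t t' hM
    by_cases h : ∃ i, (Tree1 (rp+1) k m).IsDesc (u t) (x i)
    · rw [hMpos t h] at hM
      obtain rfl := Option.some.inj hM
      have hspec := Classical.choose_spec (hIH1 (Classical.choose h)).2
      exact ⟨hspec.1, Classical.choose h, Classical.choose_spec h, hspec.2⟩
    · rw [hMneg t h] at hM
      exact Option.noConfusion rfl (heq_of_eq hM)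
  have hMcomplete : ∀ (i : Fin ℓ) t t', (Tree1 (rp+1) k m).IsDesc (u t) (x i) →
      (Tree2 (rp+1) k m).IsDesc (v t') (y i) → M t = some t' := by
    intro i t t' hx hy
    have h : ∃ j, (Tree1 (rp+1) k m).IsDesc (u t) (x j) := ⟨i, hx⟩
    rw [hMpos t h]
    congr 1
    have hxi₀ : (Tree1 (rp+1) k m).IsDesc (u t) (x (Classical.choose h)) :=
      Classical.choose_spec h
    have hspec := Classical.choose_spec (hIH1 (Classical.choose h)).2
    by_cases hij : Classical.choose h = i
    · have hy₀ : (Tree2 (rp+1) k m).IsDesc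
          (v (Classical.choose (hIH1 (Classical.choose h)).2)) (y i) := by
        rw [← hij]
        exact hspec.2
      exact hv_inj (desc_unique hBroot (hv_child _) (hv_child _) hy₀ hy)
    · obtain ⟨t'', -, hy₀, hyi⟩ := (hIH2 (Classical.choose h) i hij).1 ⟨t, hxi₀, hx⟩
      have e1 : v t'' = v (Classical.choose (hIH1 (Classical.choose h)).2) :=
        desc_unique hBroot (hv_child _) (hv_child _) hy₀ hspec.2
      have e2 : v t'' = v t' := desc_unique hBroot (hv_child _) (hv_child _) hyi hy
      rw [← hv_inj e1, hv_inj e2]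
  have hMinj : ∀ t₁ t₂ t', M t₁ = some t' → M t₂ = some t' → t₁ = t₂ := by
    intro t₁ t₂ t' h₁ h₂
    obtain ⟨hlt, i₁, hx₁, hy₁⟩ := hMdef t₁ t' h₁
    obtain ⟨-, i₂, hx₂, hy₂⟩ := hMdef t₂ t' h₂
    by_cases hij : i₁ = i₂
    · subst hij
      exact hu_inj (desc_unique hAroot (hu_child _) (hu_child _) hx₁ hx₂)
    · obtain ⟨t₀, hx₁', hx₂'⟩ := (hIH2 i₁ i₂ hij).2 ⟨t', hlt, hy₁, hy₂⟩
      have e1 : u t₀ = u t₁ := desc_unique hAroot (hu_child _) (hu_child _) hx₁' hx₁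
      have e2 : u t₀ = u t₂ := desc_unique hAroot (hu_child _) (hu_child _) hx₂' hx₂
      rw [← hu_inj e1, hu_inj e2]
  have hcover₀ : ∀ p ∈ ((List.ofFn fun i => (x i, y i)) ++
      [((Tree1 (rp+1) k m).root, (Tree2 (rp+1) k m).root)]),
      p = ((Tree1 (rp+1) k m).root, (Tree2 (rp+1) k m).root) ∨
      ∃ t t', M t = some t' ∧ (Tree1 (rp+1) k m).IsDesc (u t) p.1 ∧
        (Tree2 (rp+1) k m).IsDesc (v t') p.2 := by
    intro p hp
    rcases List.mem_append.1 hp with h1 | h1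
    · obtain ⟨i, rfl⟩ := List.mem_ofFn.1 h1
      right
      obtain ⟨t, hx⟩ := (hIH1 i).1
      obtain ⟨t', hlt, hy⟩ := (hIH1 i).2
      exact ⟨t, t', hMcomplete i t t' hx hy, hx, hy⟩
    · left; exact List.mem_singleton.1 h1
  have hwin₀ : ∀ t t', M t = some t' →
      DupWinsSched ((Tree1 (rp+1) k m).subtree (u t)) ((Tree2 (rp+1) k m).subtree (v t'))
        (a₀ :: List.replicate b₀ k) side₀
        (innerOf (Tree1 (rp+1) k m) (Tree2 (rp+1) k m) (u t) (v t')
            ((List.ofFn fun i => (x i, y i)) ++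
              [((Tree1 (rp+1) k m).root, (Tree2 (rp+1) k m).root)]) ++
          [(((Tree1 (rp+1) k m).subtree (u t)).root,
            ((Tree2 (rp+1) k m).subtree (v t')).root)]) := by
    intro t t' hM
    have hlt := (hMdef t t' hM).1
    apply dws_ofIso (φ t t' hlt)
    intro p hp
    rcases List.mem_append.1 hp with h1 | h1
    · unfold innerOf at h1
      obtain ⟨q, hq, hq2⟩ := List.mem_filterMap.1 h1
      by_cases hd : (Tree1 (rp+1) k m).IsDesc (u t) q.1 ∧ (Tree2 (rp+1) k m).IsDesc (v t') q.2
      · rw [dif_pos hd] at hq2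
        obtain rfl := Option.some.inj hq2
        rcases List.mem_append.1 hq with h2 | h2
        · obtain ⟨i, rfl⟩ := List.mem_ofFn.1 h2
          exact Subtype.ext (hIH3 i t t' hlt hd.1 hd.2).symm
        · rw [List.mem_singleton.1 h2] at hd
          exact absurd hd.1 (not_desc_root hAroot (hu_child t))
      · rw [dif_neg hd] at hq2
        exact Option.noConfusion rfl (heq_of_eq hq2)
    · rw [List.mem_singleton.1 h1]
      exact ((φ t t' hlt).map_root).symm
  have hMcard : (Finset.univ.filter fun t => (M t).isSome).card ≤ ℓ := by
    have hmap : ∀ t ∈ (Finset.univ.filter fun t => (M t).isSome),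
        (if h : ∃ i, (Tree1 (rp+1) k m).IsDesc (u t) (x i) then
          (Classical.choose h).1 else 0) ∈ Finset.range ℓ := by
      intro t ht
      simp only [Finset.mem_filter] at ht
      by_cases h : ∃ i, (Tree1 (rp+1) k m).IsDesc (u t) (x i)
      · rw [dif_pos h]
        exact Finset.mem_range.2 (Classical.choose h).2
      · rw [hMneg t h] at ht
        simp at ht
    have hinj : ∀ t₁ ∈ (Finset.univ.filter fun t => (M t).isSome),
        ∀ t₂ ∈ (Finset.univ.filter fun t => (M t).isSome),
        (if h : ∃ i, (Tree1 (rp+1) k m).IsDesc (u t₁) (x i) then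
          (Classical.choose h).1 else 0) =
        (if h : ∃ i, (Tree1 (rp+1) k m).IsDesc (u t₂) (x i) then
          (Classical.choose h).1 else 0) → t₁ = t₂ := by
      intro t₁ ht₁ t₂ ht₂ he
      simp only [Finset.mem_filter] at ht₁ ht₂
      by_cases h₁ : ∃ i, (Tree1 (rp+1) k m).IsDesc (u t₁) (x i)
      · by_cases h₂ : ∃ i, (Tree1 (rp+1) k m).IsDesc (u t₂) (x i)
        · rw [dif_pos h₁, dif_pos h₂] at he
          have : Classical.choose h₁ = Classical.choose h₂ := Fin.ext he
          have hd₁ := Classical.choose_spec h₁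
          have hd₂ := Classical.choose_spec h₂
          rw [this] at hd₁
          exact hu_inj (desc_unique hAroot (hu_child _) (hu_child _) hd₁ hd₂)
        · rw [hMneg t₂ h₂] at ht₂; simp at ht₂
      · rw [hMneg t₁ h₁] at ht₁; simp at ht₁
    calc (Finset.univ.filter fun t => (M t).isSome).card
        ≤ (Finset.range ℓ).card := Finset.card_le_card_of_injOn _ hmap hinj
      _ = ℓ := Finset.card_range ℓ
  have hcnt₀ : (Finset.univ.filter fun t => (M t).isSome).card + (a₀ + b₀ * k)
      ≤ ℓ + a₀ + b₀ * k := by linarith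
  exact step hk hrm hbud hAnice hBnice hu_child hv_child hu_inj hv_inj hu_surj hv_surj φ
    HspecF HspecT b₀ side₀ a₀ ha₀ hsf₀ hst₀ hs3₀ _ ⟨M, hMinj, hcover₀, hwin₀, hcnt₀⟩

end EhrAux
/-- the induction hypothesis with designated pairs.  With
`u₁, …, u_{m+1}` the children of the root of `T₁^{(s,k,m)}` and
`v₁, …, v_{m+1}` those of the root of `T₂^{(s,k,m)}` (the subtrees at the
`u_t` and at `v₁, …, v_m` being copies of `T₂^{(s-1,k,m)}` and the subtree at
`v_{m+1}` a copy of `T₁^{(s-1,k,m)}`), fixed rooted-tree isomorphisms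
`φ t t'` between the subtree at `u_t` and the subtree at `v_{t'}` for
`t' ≤ m`, and designated pairs `(x i, y i)` (`ℓ ≤ k` of them) satisfying
(IH1)–(IH3), Duplicator wins `ehr[T₁^{(s,k,m)}, T₂^{(s,k,m)}, s; k]` with
Spoiler starting on `T₂^{(s,k,m)}`, with the designated pairs and the pair of
roots included in the winning conditions. -/
theorem dup_wins_with_designated_pairs (s k m : ℕ) (hs : 1 ≤ s) (hk : 1 ≤ k)
    (hm : s * k ≤ m)
    (u : Fin (m + 1) → (Tree1 s k m).V)
    (v : Fin (m + 1) → (Tree2 s k m).V)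
    (hu_child : ∀ t, (Tree1 s k m).parent (u t) = some (Tree1 s k m).root)
    (hu_inj : Function.Injective u)
    (hu_surj : ∀ w, (Tree1 s k m).parent w = some (Tree1 s k m).root → ∃ t, w = u t)
    (hv_child : ∀ t', (Tree2 s k m).parent (v t') = some (Tree2 s k m).root)
    (hv_inj : Function.Injective v)
    (hv_surj : ∀ w, (Tree2 s k m).parent w = some (Tree2 s k m).root → ∃ t', w = v t')
    (hu_copy : ∀ t, Nonempty (TreeIso ((Tree1 s k m).subtree (u t)) (Tree2 (s - 1) k m)))
    (hv_copy : ∀ t' : Fin (m + 1), t'.1 < m →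
        Nonempty (TreeIso ((Tree2 s k m).subtree (v t')) (Tree2 (s - 1) k m)))
    (hv_last : Nonempty
        (TreeIso ((Tree2 s k m).subtree (v ⟨m, Nat.lt_succ_self m⟩)) (Tree1 (s - 1) k m)))
    (φ : ∀ (t : Fin (m + 1)) (t' : Fin (m + 1)), t'.1 < m →
        TreeIso ((Tree1 s k m).subtree (u t)) ((Tree2 s k m).subtree (v t')))
    (ℓ : ℕ) (hℓ : ℓ ≤ k)
    (x : Fin ℓ → (Tree1 s k m).V) (y : Fin ℓ → (Tree2 s k m).V)
    (hIH1 : ∀ i, (∃ t, (Tree1 s k m).IsDesc (u t) (x i)) ∧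
        (∃ t' : Fin (m + 1), t'.1 < m ∧ (Tree2 s k m).IsDesc (v t') (y i)))
    (hIH2 : ∀ i j, i ≠ j →
        ((∃ t, (Tree1 s k m).IsDesc (u t) (x i) ∧ (Tree1 s k m).IsDesc (u t) (x j)) ↔
         (∃ t' : Fin (m + 1), t'.1 < m ∧
            (Tree2 s k m).IsDesc (v t') (y i) ∧ (Tree2 s k m).IsDesc (v t') (y j))))
    (hIH3 : ∀ i (t t' : Fin (m + 1)) (ht' : t'.1 < m)
        (hx : (Tree1 s k m).IsDesc (u t) (x i))
        (_hy : (Tree2 s k m).IsDesc (v t') (y i)),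
        ((φ t t' ht').toEquiv ⟨x i, hx⟩).1 = y i) :
    DupWinsSched (Tree1 s k m) (Tree2 s k m) (List.replicate s k) false
      ((List.ofFn fun i => (x i, y i)) ++
        [((Tree1 s k m).root, (Tree2 s k m).root)]) := by
  obtain ⟨s', rfl⟩ : ∃ s', s = s' + 1 := ⟨s - 1, by omega⟩
  rw [List.replicate_succ]
  have hbud : ℓ + k + s' * k ≤ k + k * (s'+1) := by
    have h1 : k * (s'+1) = k * s' + k := by ring
    have h2 : s' * k = k * s' := Nat.mul_comm _ _
    linarith
  exact EhrAux.KEY s' k m hk (by rw [Nat.mul_comm]; exact hm) u v hu_child hu_inj hu_surj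
    hv_child hv_inj hv_surj hu_copy hv_last φ false k s' ℓ le_rfl (fun _ => le_rfl)
    (fun h => by simp at h) (fun h => by simp at h) hbud x y hIH1 hIH2 hIH3
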